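/- arXiv:1811.03747 — 8 statements merged into one kernel-verified Lean document; each statement's English description precedes it below -/
import Mathlib

section
/- Let G be a blow-up of the directed 5-cycle C⃗₅ with parts X₁, X₂, X₃, X₄, X₅ (so all arcs go from X_i to X_{i+1}, indices modulo 5, and there are no other arcs). Then the number of induced copies of P⃗₄ in G equals Σ_{i=1}^{5} Π_{j ≠ i} |X_j|, i.e., (Π_{i=1}^{5} |X_i|) · (Σ_{i=1}^{5} 1/|X_i|) when all parts are nonempty. -/
open scoped Classical

/-- An oriented graph: the arc relation has no loops and no 2-cycles. -/
def IsOriented {V : Type*} (A : V → V → Prop) : Prop :=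
  ∀ a b : V, A a b → ¬ A b a

/-- `T⃗₃`-freeness: no three vertices span the arcs a→b, b→c, a→c. -/
def T3Free {V : Type*} (A : V → V → Prop) : Prop :=
  ∀ a b c : V, ¬ (A a b ∧ A b c ∧ A a c)

/-- `S` is the vertex set of an induced copy of the directed path `P⃗ₖ` in the
oriented graph with arc relation `A`. -/
def IsInducedPath {V : Type*} (A : V → V → Prop) (k : ℕ) (S : Finset V) : Prop :=
  ∃ f : Fin k → V, Function.Injective f ∧ (∀ v : V, v ∈ S ↔ ∃ i, f i = v) ∧
    ∀ i j : Fin k, A (f i) (f j) ↔ (j : ℕ) = (i : ℕ) + 1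

/-- The number of induced copies of `P⃗ₖ`. -/
noncomputable def numPaths {V : Type*} [Fintype V] [DecidableEq V]
    (A : V → V → Prop) (k : ℕ) : ℕ :=
  (Finset.univ.filter fun S : Finset V => IsInducedPath A k S).card

/-- The number of induced copies of `P⃗ₖ` containing all vertices of `T`. -/
noncomputable def numPathsThrough {V : Type*} [Fintype V] [DecidableEq V]
    (A : V → V → Prop) (k : ℕ) (T : Finset V) : ℕ :=
  (Finset.univ.filter fun S : Finset V => IsInducedPath A k S ∧ T ⊆ S).card

/-- The density of induced copies of `P⃗ₖ`. -/
noncomputable def pathDensity {V : Type*} [Fintype V] [DecidableEq V]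
    (A : V → V → Prop) (k : ℕ) : ℝ :=
  (numPaths A k : ℝ) / ((Fintype.card V).choose k : ℝ)

/-- The maximum density of induced copies of `P⃗ₖ` over all `T⃗₃`-free oriented
graphs on `n` vertices. -/
noncomputable def maxDensityT3 (k n : ℕ) : ℝ :=
  sSup {d : ℝ | ∃ A : Fin n → Fin n → Prop, IsOriented A ∧ T3Free A ∧ d = pathDensity A k}

/-- The maximum density of induced copies of `P⃗ₖ` over all oriented graphs on `n`
vertices. -/
noncomputable def maxDensityAll (k n : ℕ) : ℝ :=
  sSup {d : ℝ | ∃ A : Fin n → Fin n → Prop, IsOriented A ∧ d = pathDensity A k}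

/-- `S` is the vertex set of an induced copy of the oriented graph `H` in the
oriented graph with arc relation `A`. -/
def IsInducedCopy {V W : Type*} (H : W → W → Prop) (A : V → V → Prop) (S : Finset V) : Prop :=
  ∃ f : W → V, Function.Injective f ∧ (∀ v : V, v ∈ S ↔ ∃ w, f w = v) ∧
    ∀ a b : W, A (f a) (f b) ↔ H a b

/-- The number of induced copies of `H` in `A`. -/
noncomputable def numCopies {V W : Type*} [Fintype V] [DecidableEq V]
    (H : W → W → Prop) (A : V → V → Prop) : ℕ :=
  (Finset.univ.filter fun S : Finset V => IsInducedCopy H A S).card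

/-- The number of (unordered) pairs of vertices on which the two oriented graphs `A`
and `B` differ (an arc must be added, removed, or reoriented). -/
noncomputable def pairDiff {V : Type*} [Fintype V] [LinearOrder V]
    (A B : V → V → Prop) : ℕ :=
  (Finset.univ.filter fun p : V × V => p.1 < p.2 ∧
    ¬ ((A p.1 p.2 ↔ B p.1 p.2) ∧ (A p.2 p.1 ↔ B p.2 p.1))).card

/-- `A` is a blow-up of the directed 5-cycle with parts given by the fibers of `g`. -/
def IsBlowupC5 {V : Type*} (A : V → V → Prop) (g : V → Fin 5) : Prop :=
  ∀ u v : V, A u v ↔ g v = g u + 1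

/-- The size of the part of vertices mapped to `i`. -/
noncomputable def partSize {V : Type*} [Fintype V] {m : ℕ} (g : V → Fin m) (i : Fin m) : ℕ :=
  (Finset.univ.filter fun v : V => g v = i).card

/-- `A` is a balanced blow-up of the directed 5-cycle, i.e. isomorphic to `C⃗₅(n)`. -/
def IsBalancedBlowupC5 {V : Type*} [Fintype V] (A : V → V → Prop) : Prop :=
  ∃ g : V → Fin 5, IsBlowupC5 A g ∧
    ∀ i j : Fin 5, (partSize g i : ℤ) - (partSize g j : ℤ) ≤ 1
private lemma fin5_d1 : ∀ (i : Fin 5) (k : Fin 4), i + 1 + k.castSucc ≠ i := by decide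
private lemma fin5_d2 : ∀ (i : Fin 5) (k l : Fin 4),
    (i + 1 + l.castSucc = (i + 1 + k.castSucc) + 1) ↔ (l : ℕ) = (k : ℕ) + 1 := by decide
private lemma fin5_d3 : ∀ (i j : Fin 5), j ≠ i → (j - (i + 1)).val < 4 := by decide
private lemma fin5_d4 : ∀ (i : Fin 5) (k : Fin 4), (i + 1 + k.castSucc) - (i + 1) = k.castSucc := by
  decide
private lemma fin5_d5 : ∀ (i j : Fin 5), i + 1 + (j - (i + 1)) = j := by decide
private lemma fin5_d6 : ∀ (i : Fin 5) (k l : Fin 4),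
    i + 1 + k.castSucc = i + 1 + l.castSucc → k = l := by decide
private lemma fin5_d7 : ∀ c : Fin 5, c + 4 + 1 = c := by decide
private lemma fin5_d8 : ∀ c : Fin 5, c + 1 + 1 = c + Fin.castSucc (2 : Fin 4) := by decide
private lemma fin5_d9 : ∀ c : Fin 5, c + 1 + 1 + 1 = c + Fin.castSucc (3 : Fin 4) := by decide


/-- In a blow-up of the directed 5-cycle with parts `X₁, …, X₅`,
the number of induced copies of `P⃗₄` equals `Σᵢ Πⱼ≠ᵢ |Xⱼ|`. -/
theorem numPaths_blowupC5 {V : Type*} [Fintype V] [DecidableEq V]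
    (A : V → V → Prop) (g : V → Fin 5) (hg : IsBlowupC5 A g) :
    numPaths A 4 = ∑ i : Fin 5, ∏ j ∈ Finset.univ.erase i, partSize g j := by
  classical
  have peq : ∀ (i : Fin 5) (p : ∀ j ∈ Finset.univ.erase i, V) {x y : Fin 5}
      (hx : x ∈ Finset.univ.erase i) (hy : y ∈ Finset.univ.erase i),
      x = y → p x hx = p y hy := by
    rintro i p x y hx hy rfl; rfl
  have hRHS : ∑ i : Fin 5, ∏ j ∈ Finset.univ.erase i, partSize g j
      = ((Finset.univ : Finset (Fin 5)).sigma fun i =>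
          (Finset.univ.erase i).pi fun j => Finset.univ.filter fun v => g v = j).card := by
    rw [Finset.card_sigma]
    exact Finset.sum_congr rfl fun i _ => (Finset.card_pi _ _).symm
  rw [hRHS, numPaths]
  refine (Finset.card_bij
    (fun x hx => (Finset.univ.erase x.1).attach.image fun j => x.2 j.1 j.2) ?_ ?_ ?_).symm
  · -- maps into the filter: each image set is an induced path
    rintro ⟨i, p⟩ hx
    simp only [Finset.mem_sigma, Finset.mem_univ, true_and, Finset.mem_pi] at hx
    have hgp : ∀ (j) (hj : j ∈ Finset.univ.erase i), g (p j hj) = j := by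
      intro j hj
      have := hx j hj
      simpa using this
    simp only [Finset.mem_filter, Finset.mem_univ, true_and]
    refine ⟨fun k => p (i + 1 + k.castSucc)
      (Finset.mem_erase.mpr ⟨fin5_d1 i k, Finset.mem_univ _⟩), ?_, ?_, ?_⟩
    · intro k l hkl
      have h2 : g (p (i + 1 + k.castSucc) (Finset.mem_erase.mpr ⟨fin5_d1 i k, Finset.mem_univ _⟩))
          = g (p (i + 1 + l.castSucc) (Finset.mem_erase.mpr ⟨fin5_d1 i l, Finset.mem_univ _⟩)) :=
        congrArg g hkl
      rw [hgp, hgp] at h2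
      exact fin5_d6 i k l h2
    · intro v
      simp only [Finset.mem_image, Finset.mem_attach, true_and, Subtype.exists]
      constructor
      · rintro ⟨j, hj, rfl⟩
        have hji : j ≠ i := (Finset.mem_erase.mp hj).1
        refine ⟨⟨(j - (i + 1)).val, fin5_d3 i j hji⟩, ?_⟩
        refine peq i p _ _ ?_
        have hcs : Fin.castSucc (⟨(j - (i + 1)).val, fin5_d3 i j hji⟩ : Fin 4) = j - (i + 1) :=
          Fin.ext rfl
        rw [hcs]; exact fin5_d5 i j
      · rintro ⟨k, rfl⟩
        exact ⟨i + 1 + k.castSucc, Finset.mem_erase.mpr ⟨fin5_d1 i k, Finset.mem_univ _⟩, rfl⟩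
    · intro k l
      rw [hg, hgp, hgp]
      exact fin5_d2 i k l
  · -- injective
    rintro ⟨i, p⟩ hx ⟨i', p'⟩ hy hSS
    simp only [Finset.mem_sigma, Finset.mem_univ, true_and, Finset.mem_pi] at hx hy
    simp only [] at hSS
    have hgp : ∀ (j) (hj : j ∈ Finset.univ.erase i), g (p j hj) = j := by
      intro j hj; have := hx j hj; simpa using this
    have hgp' : ∀ (j) (hj : j ∈ Finset.univ.erase i'), g (p' j hj) = j := by
      intro j hj; have := hy j hj; simpa using this
    have hii : i = i' := by
      by_contra hne
      have hi'mem : i' ∈ Finset.univ.erase i := Finset.mem_erase.mpr ⟨Ne.symm hne, Finset.mem_univ _⟩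
      have hv : p i' hi'mem ∈ (Finset.univ.erase i).attach.image fun j => p j.1 j.2 :=
        Finset.mem_image.mpr ⟨⟨i', hi'mem⟩, Finset.mem_attach _ _, rfl⟩
      rw [hSS] at hv
      obtain ⟨⟨j, hj⟩, _, hvv⟩ := Finset.mem_image.mp hv
      have hgg : g (p i' hi'mem) = j := by rw [← hvv]; exact hgp' j hj
      rw [hgp] at hgg
      exact (Finset.mem_erase.mp hj).1 (hgg ▸ rfl)
    subst hii
    have hpp : p = p' := by
      funext j hj
      have hv : p j hj ∈ (Finset.univ.erase i).attach.image fun a => p a.1 a.2 :=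
        Finset.mem_image.mpr ⟨⟨j, hj⟩, Finset.mem_attach _ _, rfl⟩
      rw [hSS] at hv
      obtain ⟨⟨j', hj'⟩, _, hvv⟩ := Finset.mem_image.mp hv
      have hjj : j' = j := by
        have h := hgp j hj
        rw [← hvv, hgp'] at h
        exact h
      rw [← hvv]
      exact peq i p' hj' hj hjj
    rw [hpp]
  · -- surjective
    intro S hS
    simp only [Finset.mem_filter, Finset.mem_univ, true_and] at hS
    obtain ⟨f, finj, fmem, farc⟩ := hS
    set c := g (f 0) with hc
    have a01 : A (f 0) (f 1) := (farc 0 1).mpr rfl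
    have a12 : A (f 1) (f 2) := (farc 1 2).mpr rfl
    have a23 : A (f 2) (f 3) := (farc 2 3).mpr rfl
    have h1 : g (f 1) = c + 1 := by rw [(hg _ _).mp a01]
    have h2 : g (f 2) = c + 1 + 1 := by rw [(hg _ _).mp a12, h1]
    have h3 : g (f 3) = c + 1 + 1 + 1 := by rw [(hg _ _).mp a23, h2]
    have gval : ∀ k : Fin 4, g (f k) = c + k.castSucc := by
      intro k
      fin_cases k
      · show g (f 0) = c + Fin.castSucc 0
        rw [← hc]
        norm_num
      · show g (f 1) = c + Fin.castSucc 1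
        rw [h1]; rfl
      · show g (f 2) = c + Fin.castSucc 2
        rw [h2]; exact fin5_d8 c
      · show g (f 3) = c + Fin.castSucc 3
        rw [h3]; exact fin5_d9 c
    set i : Fin 5 := c + 4 with hi
    have hic : i + 1 = c := fin5_d7 c
    refine ⟨⟨i, fun j hj => f ⟨(j - (i + 1)).val, fin5_d3 i j (Finset.mem_erase.mp hj).1⟩⟩,
      ?_, ?_⟩
    · simp only [Finset.mem_sigma, Finset.mem_univ, true_and, Finset.mem_pi]
      intro j hj
      simp only [Finset.mem_filter, Finset.mem_univ, true_and]
      rw [gval]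
      have hcs : Fin.castSucc (⟨(j - (i + 1)).val, fin5_d3 i j (Finset.mem_erase.mp hj).1⟩ : Fin 4)
          = j - (i + 1) := Fin.ext rfl
      rw [hcs, ← hic]
      exact fin5_d5 i j
    · ext v
      simp only [Finset.mem_image, Finset.mem_attach, true_and, Subtype.exists]
      rw [fmem v]
      constructor
      · rintro ⟨j, hj, rfl⟩
        exact ⟨_, rfl⟩
      · rintro ⟨k, rfl⟩
        refine ⟨i + 1 + k.castSucc, Finset.mem_erase.mpr ⟨fin5_d1 i k, Finset.mem_univ _⟩, ?_⟩
        congr 1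
        apply Fin.val_injective
        show (i + 1 + k.castSucc - (i + 1)).val = (Fin.castSucc k).val
        exact congrArg Fin.val (fin5_d4 i k)
end

section
/- Let x₁, x₂, x₃, x₄, x₅ be nonnegative real numbers with x₁ + x₂ + x₃ + x₄ + x₅ = n. Then Σ_{i=1}^{5} Π_{j ≠ i} x_j ≤ 5·(n/5)⁴ = n⁴/125, with equality if and only if x_i = n/5 for every i. -/
open scoped Classical

set_option maxHeartbeats 1000000

lemma pair_eq_of_aux (a b : ℝ) (h : (a-b)^2*(a^2+b^2) = 0) : a = b := by
  rcases mul_eq_zero.mp h with h | h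
  · have := (pow_eq_zero_iff two_ne_zero).mp h
    linarith
  · have ha : a = 0 := by nlinarith [sq_nonneg a, sq_nonneg b]
    have hb : b = 0 := by nlinarith [sq_nonneg a, sq_nonneg b]
    rw [ha, hb]

lemma main_ineq (a b c d e : ℝ) (ha : 0 ≤ a) (hb : 0 ≤ b) (hc : 0 ≤ c) (hd : 0 ≤ d)
    (he : 0 ≤ e) :
    125*(b*c*d*e + a*c*d*e + a*b*d*e + a*b*c*e + a*b*c*d) ≤ (a+b+c+d+e)^4 ∧
    (125*(b*c*d*e + a*c*d*e + a*b*d*e + a*b*c*e + a*b*c*d) = (a+b+c+d+e)^4 →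
      a = b ∧ a = c ∧ a = d ∧ a = e) := by
  have key : 12*((a+b+c+d+e)^4 - 125*(b*c*d*e + a*c*d*e + a*b*d*e + a*b*c*e + a*b*c*d)) =
      54*(a*b*(a-b)^2 + a*c*(a-c)^2 + a*d*(a-d)^2 + a*e*(a-e)^2 + b*c*(b-c)^2 + b*d*(b-d)^2 + b*e*(b-e)^2 + c*d*(c-d)^2 + c*e*(c-e)^2 + d*e*(d-e)^2)
    + 101*((a-b)^2*(c*d+c*e+d*e) + (a-c)^2*(b*d+b*e+d*e) + (a-d)^2*(b*c+b*e+c*e) + (a-e)^2*(b*c+b*d+c*d) + (b-c)^2*(a*d+a*e+d*e) + (b-d)^2*(a*c+a*e+c*e) + (b-e)^2*(a*c+a*d+c*d) + (c-d)^2*(a*b+a*e+b*e) + (c-e)^2*(a*b+a*d+b*d) + (d-e)^2*(a*b+a*c+b*c))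
    + 3*((a-b)^2*(a^2+b^2) + (a-c)^2*(a^2+c^2) + (a-d)^2*(a^2+d^2) + (a-e)^2*(a^2+e^2) + (b-c)^2*(b^2+c^2) + (b-d)^2*(b^2+d^2) + (b-e)^2*(b^2+e^2) + (c-d)^2*(c^2+d^2) + (c-e)^2*(c^2+e^2) + (d-e)^2*(d^2+e^2))
    + 29*((a-b)^2*(c^2+d^2+e^2) + (a-c)^2*(b^2+d^2+e^2) + (a-d)^2*(b^2+c^2+e^2) + (a-e)^2*(b^2+c^2+d^2) + (b-c)^2*(a^2+d^2+e^2) + (b-d)^2*(a^2+c^2+e^2) + (b-e)^2*(a^2+c^2+d^2) + (c-d)^2*(a^2+b^2+e^2) + (c-e)^2*(a^2+b^2+d^2) + (d-e)^2*(a^2+b^2+c^2)) := by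
    ring
  have hg1 : 0 ≤ a*b*(a-b)^2 + a*c*(a-c)^2 + a*d*(a-d)^2 + a*e*(a-e)^2 + b*c*(b-c)^2 + b*d*(b-d)^2 + b*e*(b-e)^2 + c*d*(c-d)^2 + c*e*(c-e)^2 + d*e*(d-e)^2 := by positivity
  have hg2 : 0 ≤ (a-b)^2*(c*d+c*e+d*e) + (a-c)^2*(b*d+b*e+d*e) + (a-d)^2*(b*c+b*e+c*e) + (a-e)^2*(b*c+b*d+c*d) + (b-c)^2*(a*d+a*e+d*e) + (b-d)^2*(a*c+a*e+c*e) + (b-e)^2*(a*c+a*d+c*d) + (c-d)^2*(a*b+a*e+b*e) + (c-e)^2*(a*b+a*d+b*d) + (d-e)^2*(a*b+a*c+b*c) := by positivity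
  have hg6 : 0 ≤ (a-b)^2*(c^2+d^2+e^2) + (a-c)^2*(b^2+d^2+e^2) + (a-d)^2*(b^2+c^2+e^2) + (a-e)^2*(b^2+c^2+d^2) + (b-c)^2*(a^2+d^2+e^2) + (b-d)^2*(a^2+c^2+e^2) + (b-e)^2*(a^2+c^2+d^2) + (c-d)^2*(a^2+b^2+e^2) + (c-e)^2*(a^2+b^2+d^2) + (d-e)^2*(a^2+b^2+c^2) := by positivity
  have t1 : (0:ℝ) ≤ (a-b)^2*(a^2+b^2) := by positivity
  have t2 : (0:ℝ) ≤ (a-c)^2*(a^2+c^2) := by positivity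
  have t3 : (0:ℝ) ≤ (a-d)^2*(a^2+d^2) := by positivity
  have t4 : (0:ℝ) ≤ (a-e)^2*(a^2+e^2) := by positivity
  have t5 : (0:ℝ) ≤ (b-c)^2*(b^2+c^2) := by positivity
  have t6 : (0:ℝ) ≤ (b-d)^2*(b^2+d^2) := by positivity
  have t7 : (0:ℝ) ≤ (b-e)^2*(b^2+e^2) := by positivity
  have t8 : (0:ℝ) ≤ (c-d)^2*(c^2+d^2) := by positivity
  have t9 : (0:ℝ) ≤ (c-e)^2*(c^2+e^2) := by positivity
  have t10 : (0:ℝ) ≤ (d-e)^2*(d^2+e^2) := by positivity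
  constructor
  · linarith
  · intro heq
    refine ⟨pair_eq_of_aux a b (by linarith), pair_eq_of_aux a c (by linarith),
      pair_eq_of_aux a d (by linarith), pair_eq_of_aux a e (by linarith)⟩

set_option maxHeartbeats 1000000 in
/-- If `x₁,…,x₅ ≥ 0` sum to `n`, then `Σᵢ Πⱼ≠ᵢ xⱼ ≤ 5·(n/5)⁴`, with
equality if and only if all `xᵢ = n/5`. -/
theorem sum_prod_erase_le (n : ℝ) (x : Fin 5 → ℝ) (hx : ∀ i, 0 ≤ x i)
    (hsum : ∑ i, x i = n) :
    (∑ i : Fin 5, ∏ j ∈ Finset.univ.erase i, x j) ≤ 5 * (n / 5) ^ 4 ∧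
    ((∑ i : Fin 5, ∏ j ∈ Finset.univ.erase i, x j) = 5 * (n / 5) ^ 4 ↔
      ∀ i, x i = n / 5) := by
  have hsum' : x 0 + x 1 + x 2 + x 3 + x 4 = n := by
    rw [← hsum, Fin.sum_univ_five]
  have hS : (∑ i : Fin 5, ∏ j ∈ Finset.univ.erase i, x j) =
      x 1*(x 2*(x 3*x 4)) + x 0*(x 2*(x 3*x 4)) + x 0*(x 1*(x 3*x 4)) +
      x 0*(x 1*(x 2*x 4)) + x 0*(x 1*(x 2*x 3)) := by
    simp [Fin.sum_univ_five, show (Finset.univ.erase (0:Fin 5)) = {1,2,3,4} from by decide,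
      show (Finset.univ.erase (1:Fin 5)) = {0,2,3,4} from by decide,
      show (Finset.univ.erase (2:Fin 5)) = {0,1,3,4} from by decide,
      show (Finset.univ.erase (3:Fin 5)) = {0,1,2,4} from by decide,
      show (Finset.univ.erase (4:Fin 5)) = {0,1,2,3} from by decide,
      Finset.prod_insert, Finset.mem_insert]
  obtain ⟨hle, heqc⟩ := main_ineq (x 0) (x 1) (x 2) (x 3) (x 4)
    (hx 0) (hx 1) (hx 2) (hx 3) (hx 4)
  have h5 : 5 * (n / 5) ^ 4 = (x 0 + x 1 + x 2 + x 3 + x 4) ^ 4 / 125 := by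
    rw [hsum']; ring
  constructor
  · rw [hS, h5]; nlinarith [hle]
  · constructor
    · intro heq
      have h125 : 125*(x 1*x 2*x 3*x 4 + x 0*x 2*x 3*x 4 + x 0*x 1*x 3*x 4 +
          x 0*x 1*x 2*x 4 + x 0*x 1*x 2*x 3) = (x 0 + x 1 + x 2 + x 3 + x 4)^4 := by
        rw [hS, h5] at heq; linarith [heq]
      obtain ⟨e1, e2, e3, e4⟩ := heqc h125
      have h0 : x 0 = n / 5 := by linarith
      have h1 : x 1 = n / 5 := by linarith
      have h2 : x 2 = n / 5 := by linarith
      have h3 : x 3 = n / 5 := by linarith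
      have h4 : x 4 = n / 5 := by linarith
      intro i
      fin_cases i
      · exact h0
      · exact h1
      · exact h2
      · exact h3
      · exact h4
    · intro h
      rw [hS, h 0, h 1, h 2, h 3, h 4]; ring
end

section
/- Let G be an oriented graph, let x and y be distinct vertices of G, and let G' be obtained from G by deleting y and adding a new vertex x' whose in-neighbors and out-neighbors are exactly those of x in G − y, with no arc between x and x'. Then: (i) if G is T⃗₃-free, so is G'; and (ii) P⃗₄(G') − P⃗₄(G) = P⃗₄(G, x) − P⃗₄(G, y) − P⃗₄(G, {x,y}), where P⃗₄(H) is the number of induced copies of P⃗₄ in H, P⃗₄(H, v) is the number of induced copies of P⃗₄ in H containing the vertex v, and P⃗₄(H, {x,y}) is the number of induced copies of P⃗₄ in H containing both x and y. -/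
open scoped Classical

/-- Transfer an induced path along an injective arc-preserving map. -/
lemma path_map_aux {V : Type*} [DecidableEq V] (A B : V → V → Prop) (k : ℕ) (S : Finset V)
    (σ : V → V)
    (hinj : ∀ u ∈ S, ∀ v ∈ S, σ u = σ v → u = v)
    (harc : ∀ u ∈ S, ∀ v ∈ S, (B u v ↔ A (σ u) (σ v)))
    (h : IsInducedPath B k S) : IsInducedPath A k (S.image σ) := by
  obtain ⟨f, hf, hmem, harcs⟩ := h
  have hfS : ∀ i, f i ∈ S := fun i => (hmem (f i)).2 ⟨i, rfl⟩
  refine ⟨σ ∘ f, ?_, ?_, ?_⟩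
  · intro a b hab
    exact hf (hinj _ (hfS a) _ (hfS b) hab)
  · intro v
    simp only [Finset.mem_image, Function.comp]
    constructor
    · rintro ⟨u, hu, rfl⟩
      obtain ⟨i, rfl⟩ := (hmem u).1 hu
      exact ⟨i, rfl⟩
    · rintro ⟨i, rfl⟩
      exact ⟨f i, hfS i, rfl⟩
  · intro i j
    rw [Function.comp, Function.comp, ← harc _ (hfS i) _ (hfS j), harcs]

lemma image_ite_aux {V : Type*} [DecidableEq V] {x y : V} (S : Finset V)
    (hy : y ∈ S) (hx : x ∉ S) :
    S.image (fun v => if v = y then x else v) = insert x (S.erase y) := by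
  ext v
  simp only [Finset.mem_image, Finset.mem_insert, Finset.mem_erase]
  constructor
  · rintro ⟨u, hu, rfl⟩
    by_cases h : u = y
    · simp [h]
    · simp only [if_neg h]
      right; exact ⟨h, hu⟩
  · rintro (rfl | ⟨hvy, hv⟩)
    · exact ⟨y, hy, by simp⟩
    · exact ⟨v, hv, by simp [hvy]⟩

/-- Count of subsets satisfying a predicate (with a fixed classical instance). -/
noncomputable def cntP {V : Type*} [Fintype V] (p : Finset V → Prop) : ℕ :=
  (Finset.univ.filter fun S => p S).card

lemma cntP_congr {V : Type*} [Fintype V] (p q : Finset V → Prop)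
    (h : ∀ S, p S ↔ q S) : cntP p = cntP q := by
  unfold cntP
  congr 1
  ext S
  simp [h S]

lemma cntP_split {V : Type*} [Fintype V] (p q : Finset V → Prop) :
    cntP p = cntP (fun S => p S ∧ q S) + cntP (fun S => p S ∧ ¬ q S) := by
  classical
  have key := Finset.card_filter_add_card_filter_not
    (s := Finset.univ.filter fun S : Finset V => p S) (p := q)
  have e0 : cntP p = (Finset.univ.filter fun S : Finset V => p S).card := rfl
  have e1 : cntP (fun S => p S ∧ q S)
      = ((Finset.univ.filter fun S : Finset V => p S).filter q).card := by
    unfold cntP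
    congr 1
    ext S
    simp [Finset.mem_filter]
  have e2 : cntP (fun S => p S ∧ ¬ q S)
      = ((Finset.univ.filter fun S : Finset V => p S).filter (fun S => ¬ q S)).card := by
    unfold cntP
    congr 1
    ext S
    simp [Finset.mem_filter]
  rw [e0, e1, e2]
  omega

/-- Let `B` be obtained from the oriented graph `A` by deleting the
vertex `y` and adding in its place a clone `x'` of `x` (here the vertex `y` of `B`
plays the role of `x'`: it has the same in- and out-neighbours as `x` away from
`{x, y}`, and is non-adjacent to `x`). Then (i) if `A` is `T⃗₃`-free so is `B`, and
(ii) `P⃗₄(B) − P⃗₄(A) = P⃗₄(A,x) − P⃗₄(A,y) − P⃗₄(A,{x,y})`. -/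
theorem clone_vertex_count {V : Type*} [Fintype V] [DecidableEq V]
    (A B : V → V → Prop) (hA : IsOriented A) (x y : V) (hxy : x ≠ y)
    (hB1 : ∀ u v : V, u ≠ y → v ≠ y → (B u v ↔ A u v))
    (hB2 : ∀ v : V, v ≠ y → v ≠ x → (B y v ↔ A x v) ∧ (B v y ↔ A v x))
    (hB3 : ¬ B x y ∧ ¬ B y x ∧ ¬ B y y) :
    (T3Free A → T3Free B) ∧
    (numPaths B 4 : ℤ) - (numPaths A 4 : ℤ) =
      (numPathsThrough A 4 {x} : ℤ) - (numPathsThrough A 4 {y} : ℤ) -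
        (numPathsThrough A 4 ({x, y} : Finset V) : ℤ) := by
  classical
  have hloop : ∀ u : V, ¬ A u u := fun u h => hA u u h h
  have clone_out : ∀ v : V, v ≠ y → v ≠ x → (B y v ↔ A x v) := fun v h1 h2 => (hB2 v h1 h2).1
  have clone_in : ∀ v : V, v ≠ y → v ≠ x → (B v y ↔ A v x) := fun v h1 h2 => (hB2 v h1 h2).2
  constructor
  · -- Part (i)
    intro hT3 a b c ⟨hab, hbc, hac⟩
    have harcB : ∀ u v : V, B u v →
        A (if u = y then x else u) (if v = y then x else v) := by
      intro u v huv
      by_cases hu : u = y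
      · by_cases hv : v = y
        · rw [hu, hv] at huv; exact absurd huv hB3.2.2
        · have hvx : v ≠ x := by intro h; rw [hu, h] at huv; exact hB3.2.1 huv
          rw [hu] at huv
          rw [if_pos hu, if_neg hv]
          exact (clone_out v hv hvx).1 huv
      · by_cases hv : v = y
        · have hux : u ≠ x := by intro h; rw [hv, h] at huv; exact hB3.1 huv
          rw [hv] at huv
          rw [if_neg hu, if_pos hv]
          exact (clone_in u hu hux).1 huv
        · rw [if_neg hu, if_neg hv]
          exact (hB1 u v hu hv).1 huv
    exact hT3 _ _ _ ⟨harcB _ _ hab, harcB _ _ hbc, harcB _ _ hac⟩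
  · -- Part (ii)
    have no_both : ∀ S : Finset V, IsInducedPath B 4 S → y ∈ S → x ∉ S := by
      intro S hS hyS hxS
      obtain ⟨f, hf, hmem, harcs⟩ := hS
      obtain ⟨i, hi⟩ := (hmem x).1 hxS
      obtain ⟨j, hj⟩ := (hmem y).1 hyS
      have hij : i ≠ j := by
        intro h; rw [h, hj] at hi; exact hxy hi.symm
      have h1 : ¬ ((j : ℕ) = (i : ℕ) + 1) := fun h =>
        hB3.1 (by rw [← hi, ← hj]; exact (harcs i j).2 h)
      have h2 : ¬ ((i : ℕ) = (j : ℕ) + 1) := fun h =>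
        hB3.2.1 (by rw [← hj, ← hi]; exact (harcs j i).2 h)
      have key : ∀ k : Fin 4, k ≠ i → k ≠ j →
          (((k:ℕ) = (i:ℕ) + 1) ↔ ((k:ℕ) = (j:ℕ) + 1)) := by
        intro k hki hkj
        have hkx : f k ≠ x := fun h => hki (hf (h.trans hi.symm))
        have hky : f k ≠ y := fun h => hkj (hf (h.trans hj.symm))
        have e1 : B (f i) (f k) ↔ A x (f k) := by rw [hi]; exact hB1 x (f k) hxy hky
        have e2 : B (f j) (f k) ↔ A x (f k) := by rw [hj]; exact clone_out (f k) hky hkx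
        rw [← harcs i k, ← harcs j k, e1, e2]
      have hdec : ¬ ∃ i j : Fin 4, i ≠ j ∧ ¬ ((j:ℕ) = (i:ℕ) + 1) ∧ ¬ ((i:ℕ) = (j:ℕ) + 1) ∧
          ∀ k : Fin 4, k ≠ i → k ≠ j → (((k:ℕ) = (i:ℕ) + 1) ↔ ((k:ℕ) = (j:ℕ) + 1)) := by
        decide
      exact hdec ⟨i, j, hij, h1, h2, key⟩
    have haway : ∀ S : Finset V, y ∉ S → (IsInducedPath B 4 S ↔ IsInducedPath A 4 S) := by
      intro S hyS
      have hne : ∀ u ∈ S, u ≠ y := fun u hu h => hyS (h ▸ hu)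
      constructor
      · intro h
        have := path_map_aux A B 4 S id (fun u _ v _ h => h)
          (fun u hu v hv => hB1 u v (hne u hu) (hne v hv)) h
        simpa using this
      · intro h
        have := path_map_aux B A 4 S id (fun u _ v _ h => h)
          (fun u hu v hv => (hB1 u v (hne u hu) (hne v hv)).symm) h
        simpa using this
    have hswap1 : ∀ S : Finset V, y ∈ S → x ∉ S → IsInducedPath B 4 S →
        IsInducedPath A 4 (insert x (S.erase y)) := by
      intro S hyS hxS h
      have hinj : ∀ u ∈ S, ∀ v ∈ S,
          (if u = y then x else u) = (if v = y then x else v) → u = v := by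
        intro u hu v hv huv
        by_cases h1 : u = y <;> by_cases h2 : v = y
        · rw [h1, h2]
        · rw [if_pos h1, if_neg h2] at huv
          exact absurd (huv ▸ hv) hxS
        · rw [if_neg h1, if_pos h2] at huv
          exact absurd (huv ▸ hu) hxS
        · rwa [if_neg h1, if_neg h2] at huv
      have harc : ∀ u ∈ S, ∀ v ∈ S,
          (B u v ↔ A (if u = y then x else u) (if v = y then x else v)) := by
        intro u hu v hv
        by_cases h1 : u = y <;> by_cases h2 : v = y
        · rw [if_pos h1, if_pos h2, h1, h2]
          exact iff_of_false hB3.2.2 (hloop x)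
        · have hvx : v ≠ x := fun h => hxS (h ▸ hv)
          rw [if_pos h1, if_neg h2, h1]
          exact clone_out v h2 hvx
        · have hux : u ≠ x := fun h => hxS (h ▸ hu)
          rw [if_neg h1, if_pos h2, h2]
          exact clone_in u h1 hux
        · rw [if_neg h1, if_neg h2]
          exact hB1 u v h1 h2
      have := path_map_aux A B 4 S (fun v => if v = y then x else v) hinj harc h
      rwa [image_ite_aux S hyS hxS] at this
    have hswap2 : ∀ T : Finset V, x ∈ T → y ∉ T → IsInducedPath A 4 T →
        IsInducedPath B 4 (insert y (T.erase x)) := by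
      intro T hxT hyT h
      have hinj : ∀ u ∈ T, ∀ v ∈ T,
          (if u = x then y else u) = (if v = x then y else v) → u = v := by
        intro u hu v hv huv
        by_cases h1 : u = x <;> by_cases h2 : v = x
        · rw [h1, h2]
        · rw [if_pos h1, if_neg h2] at huv
          exact absurd (huv ▸ hv) hyT
        · rw [if_neg h1, if_pos h2] at huv
          exact absurd (huv ▸ hu) hyT
        · rwa [if_neg h1, if_neg h2] at huv
      have harc : ∀ u ∈ T, ∀ v ∈ T,
          (A u v ↔ B (if u = x then y else u) (if v = x then y else v)) := by
        intro u hu v hv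
        by_cases h1 : u = x <;> by_cases h2 : v = x
        · rw [if_pos h1, if_pos h2, h1, h2]
          exact iff_of_false (hloop x) hB3.2.2
        · have hvy : v ≠ y := fun h => hyT (h ▸ hv)
          rw [if_pos h1, if_neg h2, h1]
          exact (clone_out v hvy h2).symm
        · have huy : u ≠ y := fun h => hyT (h ▸ hu)
          rw [if_neg h1, if_pos h2, h2]
          exact (clone_in u huy h1).symm
        · have huy : u ≠ y := fun h => hyT (h ▸ hu)
          have hvy : v ≠ y := fun h => hyT (h ▸ hv)
          rw [if_neg h1, if_neg h2]
          exact (hB1 u v huy hvy).symm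
      have := path_map_aux B A 4 T (fun v => if v = x then y else v) hinj harc h
      rwa [image_ite_aux (x := y) (y := x) T hxT hyT] at this
    -- counting
    have n2 : cntP (fun S : Finset V => IsInducedPath B 4 S ∧ ¬ y ∈ S)
        = cntP (fun S : Finset V => IsInducedPath A 4 S ∧ ¬ y ∈ S) := by
      apply cntP_congr
      intro S
      constructor
      · rintro ⟨h, hy⟩; exact ⟨(haway S hy).1 h, hy⟩
      · rintro ⟨h, hy⟩; exact ⟨(haway S hy).2 h, hy⟩
    have n3 : cntP (fun S : Finset V => IsInducedPath B 4 S ∧ y ∈ S)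
        = cntP (fun S : Finset V => (IsInducedPath A 4 S ∧ x ∈ S) ∧ ¬ y ∈ S) := by
      unfold cntP
      refine Finset.card_bij' (fun S _ => insert x (S.erase y))
        (fun T _ => insert y (T.erase x)) ?_ ?_ ?_ ?_
      · intro S hS
        simp only [Finset.mem_filter, Finset.mem_univ, true_and] at hS ⊢
        obtain ⟨hP, hyS⟩ := hS
        have hxS : x ∉ S := no_both S hP hyS
        refine ⟨⟨hswap1 S hyS hxS hP, Finset.mem_insert_self _ _⟩, ?_⟩
        simp [Finset.mem_insert, Finset.mem_erase, hxy.symm]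
      · intro T hT
        simp only [Finset.mem_filter, Finset.mem_univ, true_and] at hT ⊢
        obtain ⟨⟨hP, hxT⟩, hyT⟩ := hT
        exact ⟨hswap2 T hxT hyT hP, Finset.mem_insert_self _ _⟩
      · intro S hS
        simp only [Finset.mem_filter, Finset.mem_univ, true_and] at hS
        obtain ⟨hP, hyS⟩ := hS
        have hxS : x ∉ S := no_both S hP hyS
        show insert y ((insert x (S.erase y)).erase x) = S
        rw [Finset.erase_insert (fun h => hxS (Finset.mem_of_mem_erase h)),
          Finset.insert_erase hyS]
      · intro T hT
        simp only [Finset.mem_filter, Finset.mem_univ, true_and] at hT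
        obtain ⟨⟨hP, hxT⟩, hyT⟩ := hT
        show insert x ((insert y (T.erase x)).erase y) = T
        rw [Finset.erase_insert (fun h => hyT (Finset.mem_of_mem_erase h)),
          Finset.insert_erase hxT]
    have eB := cntP_split (fun S : Finset V => IsInducedPath B 4 S) (fun S => y ∈ S)
    have eA := cntP_split (fun S : Finset V => IsInducedPath A 4 S) (fun S => y ∈ S)
    have eAx := cntP_split (fun S : Finset V => IsInducedPath A 4 S ∧ x ∈ S) (fun S => y ∈ S)
    have dB : numPaths B 4 = cntP (fun S : Finset V => IsInducedPath B 4 S) := rfl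
    have dA : numPaths A 4 = cntP (fun S : Finset V => IsInducedPath A 4 S) := rfl
    have ey : numPathsThrough A 4 {y}
        = cntP (fun S : Finset V => IsInducedPath A 4 S ∧ y ∈ S) := by
      unfold numPathsThrough cntP
      congr 1
      ext S
      simp [Finset.singleton_subset_iff]
    have ex : numPathsThrough A 4 {x}
        = cntP (fun S : Finset V => IsInducedPath A 4 S ∧ x ∈ S) := by
      unfold numPathsThrough cntP
      congr 1
      ext S
      simp [Finset.singleton_subset_iff]
    have exy : numPathsThrough A 4 ({x, y} : Finset V)
        = cntP (fun S : Finset V => (IsInducedPath A 4 S ∧ x ∈ S) ∧ y ∈ S) := by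
      unfold numPathsThrough cntP
      congr 1
      ext S
      simp only [Finset.mem_filter, Finset.mem_univ, true_and,
        Finset.insert_subset_iff, Finset.singleton_subset_iff, and_assoc]
    rw [dB, dA, ey, ex, exy]
    omega
end

section
/- There exists n₀ such that for every n ≥ n₀, if G is a T⃗₃-free oriented graph on n vertices that maximizes the number of induced copies of P⃗₄ among all T⃗₃-free oriented graphs on n vertices, then every vertex x of G is contained in at least 0.19·C(n,3) induced copies of P⃗₄. -/
open scoped Classical

lemma path_card {V : Type*} [DecidableEq V] {A : V → V → Prop} {S : Finset V}
    (h : IsInducedPath A 4 S) : S.card = 4 := by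
  obtain ⟨f, hinj, hmem, -⟩ := h
  have : S = Finset.univ.image f := by
    ext v; simp [hmem, eq_comm]
  rw [this, Finset.card_image_of_injective _ hinj]
  simp

lemma double_count {V : Type*} [Fintype V] [DecidableEq V] (A : V → V → Prop) :
    ∑ x : V, numPathsThrough A 4 {x} = 4 * numPaths A 4 := by
  have h1 : ∀ x : V, numPathsThrough A 4 {x}
      = ∑ S ∈ Finset.univ.filter (fun S : Finset V => IsInducedPath A 4 S),
          (if x ∈ S then 1 else 0) := by
    intro x
    rw [numPathsThrough]
    simp only [Finset.singleton_subset_iff, ← Finset.filter_filter, Finset.card_filter]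
  calc ∑ x : V, numPathsThrough A 4 {x}
      = ∑ x : V, ∑ S ∈ Finset.univ.filter (fun S : Finset V => IsInducedPath A 4 S),
          (if x ∈ S then 1 else 0) := by simp_rw [h1]
    _ = ∑ S ∈ Finset.univ.filter (fun S : Finset V => IsInducedPath A 4 S),
          ∑ x : V, (if x ∈ S then 1 else 0) := Finset.sum_comm
    _ = ∑ S ∈ Finset.univ.filter (fun S : Finset V => IsInducedPath A 4 S), S.card := by
          apply Finset.sum_congr rfl; intro S _; simp [Finset.card_filter]
    _ = ∑ S ∈ Finset.univ.filter (fun S : Finset V => IsInducedPath A 4 S), 4 := by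
          apply Finset.sum_congr rfl; intro S hS
          exact path_card (Finset.mem_filter.1 hS).2
    _ = 4 * numPaths A 4 := by rw [Finset.sum_const, numPaths]; ring

lemma clone_bound {V : Type*} [Fintype V] [DecidableEq V] {A : V → V → Prop}
    (hA : IsOriented A) (hT : T3Free A) (v x : V) (hvx : v ≠ x) :
    ∃ B : V → V → Prop, IsOriented B ∧ T3Free B ∧
      numPaths A 4 + numPathsThrough A 4 {v} ≤
        numPaths B 4 + numPathsThrough A 4 {x} + numPathsThrough A 4 {v, x} := by
  set r : V → V := fun y => if y = x then v else y with hr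
  refine ⟨fun a b => A (r a) (r b), ?_, ?_, ?_⟩
  · intro a b h h'; exact hA _ _ h h'
  · intro a b c h; exact hT _ _ _ h
  set B : V → V → Prop := fun a b => A (r a) (r b) with hB
  set P := fun S : Finset V => IsInducedPath A 4 S with hP
  set Pa := Finset.univ.filter P with hPa
  set 𝒜₁ := Pa.filter (fun S => x ∉ S) with h𝒜₁
  set 𝒜₂ := Pa.filter (fun S => v ∈ S ∧ x ∉ S) with h𝒜₂
  -- counting identities
  have hNx : 𝒜₁.card + numPathsThrough A 4 {x} = numPaths A 4 := by
    rw [numPathsThrough, numPaths]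
    have : (Finset.univ.filter fun S : Finset V => IsInducedPath A 4 S ∧ {x} ⊆ S)
        = Pa.filter (fun S => x ∈ S) := by
      rw [hPa, Finset.filter_filter]
      apply Finset.filter_congr; intro S _; simp [hP]
    rw [this, h𝒜₁, Nat.add_comm]
    exact Finset.card_filter_add_card_filter_not _
  have hNv : 𝒜₂.card + numPathsThrough A 4 {v, x} = numPathsThrough A 4 {v} := by
    rw [numPathsThrough, numPathsThrough]
    have e1 : (Finset.univ.filter fun S : Finset V => IsInducedPath A 4 S ∧ {v, x} ⊆ S)
        = (Pa.filter (fun S => v ∈ S)).filter (fun S => x ∈ S) := by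
      rw [hPa, Finset.filter_filter, Finset.filter_filter]
      apply Finset.filter_congr; intro S _
      simp [hP, Finset.insert_subset_iff, and_assoc]
    have e2 : (Finset.univ.filter fun S : Finset V => IsInducedPath A 4 S ∧ {v} ⊆ S)
        = Pa.filter (fun S => v ∈ S) := by
      rw [hPa, Finset.filter_filter]
      apply Finset.filter_congr; intro S _; simp [hP]
    have e3 : 𝒜₂ = (Pa.filter (fun S => v ∈ S)).filter (fun S => x ∉ S) := by
      rw [h𝒜₂, hPa, Finset.filter_filter, Finset.filter_filter, Finset.filter_filter]
    rw [e1, e2, e3, Nat.add_comm]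
    exact Finset.card_filter_add_card_filter_not _
  -- paths avoiding x survive in B
  have key1 : ∀ S ∈ 𝒜₁, IsInducedPath B 4 S := by
    intro S hS
    rw [h𝒜₁, Finset.mem_filter] at hS
    obtain ⟨hS1, hxS⟩ := hS
    rw [hPa, Finset.mem_filter] at hS1
    obtain ⟨f, hinj, hmem, harc⟩ := hS1.2
    refine ⟨f, hinj, hmem, ?_⟩
    intro i j
    have hfi : ∀ i, f i ≠ x := fun i h => hxS (by rw [← h]; exact (hmem _).2 ⟨i, rfl⟩)
    simp only [hB, hr]
    rw [if_neg (hfi i), if_neg (hfi j)]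
    exact harc i j
  -- paths through v avoiding x give new paths through x in B
  set Φ : Finset V → Finset V := fun S => insert x (S.erase v) with hΦ
  have key2 : ∀ S ∈ 𝒜₂, IsInducedPath B 4 (Φ S) := by
    intro S hS
    rw [h𝒜₂, Finset.mem_filter] at hS
    obtain ⟨hS1, hvS, hxS⟩ := hS
    rw [hPa, Finset.mem_filter] at hS1
    obtain ⟨f, hinj, hmem, harc⟩ := hS1.2
    have hfx : ∀ i, f i ≠ x := fun i h => hxS (by rw [← h]; exact (hmem _).2 ⟨i, rfl⟩)
    set f' : Fin 4 → V := fun i => if f i = v then x else f i with hf'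
    have hrf : ∀ i, r (f' i) = f i := by
      intro i; simp only [hf', hr]
      by_cases h : f i = v
      · rw [if_pos h, if_pos rfl, h]
      · rw [if_neg h, if_neg (hfx i)]
    refine ⟨f', ?_, ?_, ?_⟩
    · intro i j hij
      simp only [hf'] at hij
      by_cases hi : f i = v <;> by_cases hj : f j = v
      · exact hinj (by rw [hi, hj])
      · rw [if_pos hi, if_neg hj] at hij; exact absurd hij.symm (hfx j)
      · rw [if_neg hi, if_pos hj] at hij; exact absurd hij (hfx i)
      · rw [if_neg hi, if_neg hj] at hij; exact hinj hij
    · intro u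
      constructor
      · intro hu
        rcases Finset.mem_insert.1 hu with h | h
        · obtain ⟨i, hi⟩ := (hmem v).1 hvS
          exact ⟨i, by simp [hf', hi, h]⟩
        · obtain ⟨i, hi⟩ := (hmem u).1 (Finset.mem_of_mem_erase h)
          have : f i ≠ v := by rw [hi]; exact Finset.ne_of_mem_erase h
          refine ⟨i, ?_⟩
          show (if f i = v then x else f i) = u
          rw [if_neg this]; exact hi
      · rintro ⟨i, rfl⟩
        simp only [hf']
        by_cases h : f i = v
        · rw [if_pos h]; exact Finset.mem_insert_self _ _
        · rw [if_neg h]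
          exact Finset.mem_insert_of_mem (Finset.mem_erase.2 ⟨h, (hmem _).2 ⟨i, rfl⟩⟩)
    · intro i j
      simp only [hB]
      rw [hrf i, hrf j]
      exact harc i j
  -- assemble
  have hsub : 𝒜₁ ∪ 𝒜₂.image Φ ⊆ Finset.univ.filter (fun S => IsInducedPath B 4 S) := by
    intro S hS
    rcases Finset.mem_union.1 hS with h | h
    · exact Finset.mem_filter.2 ⟨Finset.mem_univ _, key1 _ h⟩
    · obtain ⟨T, hT, rfl⟩ := Finset.mem_image.1 h
      exact Finset.mem_filter.2 ⟨Finset.mem_univ _, key2 _ hT⟩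
  have hdisj : Disjoint 𝒜₁ (𝒜₂.image Φ) := by
    rw [Finset.disjoint_left]
    intro S hS hS'
    obtain ⟨T, hT, rfl⟩ := Finset.mem_image.1 hS'
    have : x ∉ Φ T := (Finset.mem_filter.1 hS).2
    exact this (Finset.mem_insert_self _ _)
  have hΦinj : Set.InjOn Φ 𝒜₂ := by
    intro S1 h1 S2 h2 h
    have hx1 : x ∉ S1.erase v := fun h' =>
      ((Finset.mem_filter.1 h1).2).2 (Finset.mem_of_mem_erase h')
    have hx2 : x ∉ S2.erase v := fun h' =>
      ((Finset.mem_filter.1 h2).2).2 (Finset.mem_of_mem_erase h')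
    have := congrArg (fun T => Finset.erase T x) h
    simp only [hΦ, Finset.erase_insert hx1, Finset.erase_insert hx2] at this
    have := congrArg (fun T => insert v T) this
    simpa [Finset.insert_erase ((Finset.mem_filter.1 h1).2).1,
      Finset.insert_erase ((Finset.mem_filter.1 h2).2).1] using this
  have hcard : 𝒜₁.card + 𝒜₂.card ≤ numPaths B 4 := by
    rw [numPaths]
    calc 𝒜₁.card + 𝒜₂.card = 𝒜₁.card + (𝒜₂.image Φ).card := by
          rw [Finset.card_image_of_injOn hΦinj]
      _ = (𝒜₁ ∪ 𝒜₂.image Φ).card := (Finset.card_union_of_disjoint hdisj).symm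
      _ ≤ _ := Finset.card_le_card hsub
  omega

lemma pair_bound {V : Type*} [Fintype V] [DecidableEq V] (A : V → V → Prop)
    (v x : V) (hvx : v ≠ x) :
    numPathsThrough A 4 {v, x} ≤ (Fintype.card V).choose 2 := by
  rw [numPathsThrough, ← Finset.card_univ, ← Finset.card_powersetCard]
  apply Finset.card_le_card_of_injOn (fun S => S \ {v, x})
  · intro S hS
    rw [Finset.mem_coe, Finset.mem_filter] at hS
    obtain ⟨-, hS, hsub⟩ := hS
    rw [Finset.mem_coe, Finset.mem_powersetCard]
    refine ⟨Finset.subset_univ _, ?_⟩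
    rw [Finset.card_sdiff_of_subset hsub, path_card hS]
    rw [Finset.card_insert_of_notMem (by simp [hvx]), Finset.card_singleton]
  · intro S1 h1 S2 h2 h
    have e1 : S1 = S1 \ {v, x} ∪ {v, x} :=
      (Finset.sdiff_union_of_subset (Finset.mem_filter.1 h1).2.2).symm
    have e2 : S2 = S2 \ {v, x} ∪ {v, x} :=
      (Finset.sdiff_union_of_subset (Finset.mem_filter.1 h2).2.2).symm
    rw [e1, e2]
    simp only at h
    rw [h]

lemma exists_big_vertex {V : Type*} [Fintype V] [DecidableEq V] (A : V → V → Prop)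
    (h : 0 < Fintype.card V) :
    ∃ v : V, 4 * numPaths A 4 ≤ Fintype.card V * numPathsThrough A 4 {v} := by
  have hne : (Finset.univ : Finset V).Nonempty := Finset.univ_nonempty_iff.2
    (Fintype.card_pos_iff.1 h)
  have hsum : ∑ _v : V, 4 * numPaths A 4
      ≤ ∑ v : V, Fintype.card V * numPathsThrough A 4 {v} := by
    have h1 : ∑ v : V, Fintype.card V * numPathsThrough A 4 {v}
        = Fintype.card V * (4 * numPaths A 4) := by
      rw [← Finset.mul_sum, double_count A]
    rw [h1, Finset.sum_const, Finset.card_univ, smul_eq_mul]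
  obtain ⟨v, -, hv⟩ := Finset.exists_le_of_sum_le hne hsum
  exact ⟨v, hv⟩

def offF : Fin 4 → Fin 5 := fun k => ⟨k.val, by omega⟩

lemma blowup_bound (n : ℕ) :
    ∃ A₀ : Fin n → Fin n → Prop, IsOriented A₀ ∧ T3Free A₀ ∧
      5 * (n / 5) ^ 4 ≤ numPaths A₀ 4 := by
  set m := n / 5 with hm
  have hm5 : m * 5 ≤ n := Nat.div_mul_le_self n 5
  set g : Fin n → Fin 5 := fun v => ⟨v.val % 5, by omega⟩ with hg0
  refine ⟨fun u v => g v = g u + 1, ?_, ?_, ?_⟩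
  · -- oriented
    intro a b h1 h2
    rw [h1] at h2
    exact (by decide : ∀ t : Fin 5, t ≠ t + 1 + 1) _ h2
  · -- T3-free
    rintro a b c ⟨h1, h2, h3⟩
    rw [h1] at h2
    rw [h3] at h2
    exact (by decide : ∀ t : Fin 5, t ≠ t + 1) _ h2
  · -- counting
    set A₀ : Fin n → Fin n → Prop := fun u v => g v = g u + 1 with hA₀
    have hvlt : ∀ (j : Fin m) (i : Fin 5), j.val * 5 + i.val < n := by
      intro j i
      have h1 := j.isLt
      have h2 := i.isLt
      omega
    set vert : Fin 5 → Fin m → Fin n := fun i j => ⟨j.val * 5 + i.val, hvlt j i⟩ with hvert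
    have hgv : ∀ i j, g (vert i j) = i := by
      intro i j
      apply Fin.ext
      show (j.val * 5 + i.val) % 5 = i.val
      have := i.isLt
      omega
    have hvinj : ∀ i j i' j', vert i j = vert i' j' → i = i' ∧ j = j' := by
      intro i j i' j' h
      have hval : j.val * 5 + i.val = j'.val * 5 + i'.val := congrArg Fin.val h
      have h1 := i.isLt; have h2 := i'.isLt
      constructor <;> apply Fin.ext <;> omega
    have Hdec : ∀ (i : Fin 5) (p q : Fin 4),
        (i + offF q = i + offF p + 1 ↔ (q : ℕ) = (p : ℕ) + 1) := by decide
    have Hi : ∀ i i' : Fin 5, (∀ k : Fin 4, ∃ k' : Fin 4, i' + offF k' = i + offF k) → i = i' := by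
      decide
    set D := Fin 5 × Fin m × Fin m × Fin m × Fin m with hD
    set pick : D → Fin 4 → Fin m := fun z => ![z.2.1, z.2.2.1, z.2.2.2.1, z.2.2.2.2] with hpick
    set ff : D → Fin 4 → Fin n := fun z k => vert (z.1 + offF k) (pick z k) with hff
    set F : D → Finset (Fin n) := fun z => Finset.univ.image (ff z) with hF
    have hpath : ∀ z : D, IsInducedPath A₀ 4 (F z) := by
      intro z
      refine ⟨ff z, ?_, ?_, ?_⟩
      · intro k1 k2 h
        have := (hvinj _ _ _ _ h).1
        have h2 : offF k1 = offF k2 := add_left_cancel this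
        have := congrArg Fin.val h2
        exact Fin.ext this
      · intro v; simp [hF]
      · intro p q
        show g (ff z q) = g (ff z p) + 1 ↔ (q : ℕ) = (p : ℕ) + 1
        rw [hff]
        simp only [hgv]
        exact Hdec z.1 p q
    have hFinj : Set.InjOn F (Finset.univ : Finset D) := by
      rintro ⟨i, a, b, c, d⟩ - ⟨i', a', b', c', d'⟩ - h
      have hmem : ∀ k : Fin 4, ∃ k' : Fin 4,
          ff (i', a', b', c', d') k' = ff (i, a, b, c, d) k := by
        intro k
        have : ff (i, a, b, c, d) k ∈ F (i', a', b', c', d') := by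
          rw [← h, hF]; exact Finset.mem_image_of_mem _ (Finset.mem_univ k)
        rw [hF] at this
        obtain ⟨k', -, hk'⟩ := Finset.mem_image.1 this
        exact ⟨k', hk'⟩
      have hii : i = i' := by
        apply Hi
        intro k
        obtain ⟨k', hk'⟩ := hmem k
        exact ⟨k', (hvinj _ _ _ _ hk').1⟩
      subst hii
      have hcomp : ∀ k : Fin 4, pick (i, a', b', c', d') k = pick (i, a, b, c, d) k := by
        intro k
        obtain ⟨k', hk'⟩ := hmem k
        obtain ⟨h1, h2⟩ := hvinj _ _ _ _ hk'
        have h1' : i + offF k' = i + offF k := h1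
        have h2' : offF k' = offF k := add_left_cancel h1'
        have h3' := congrArg (Fin.val (n := 5)) h2'
        have : k' = k := Fin.ext (by simpa [offF] using h3')
        rw [this] at h2
        exact h2
      have h0 := hcomp 0
      have h1 := hcomp 1
      have h2 := hcomp 2
      have h3 := hcomp 3
      simp [hpick] at h0 h1 h2 h3
      simp [h0, h1, h2, h3]
    have hsub : ∀ z ∈ (Finset.univ : Finset D),
        F z ∈ Finset.univ.filter (fun S => IsInducedPath A₀ 4 S) :=
      fun z _ => Finset.mem_filter.2 ⟨Finset.mem_univ _, hpath z⟩
    have hcard := Finset.card_le_card_of_injOn F hsub hFinj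
    rw [Finset.card_univ] at hcard
    have hcardD : Fintype.card D = 5 * m ^ 4 := by
      simp [hD]; ring
    rw [hcardD] at hcard
    exact hcard

set_option maxHeartbeats 1600000 in
/-- For all sufficiently large `n`, in any `T⃗₃`-free oriented graph
on `n` vertices maximizing the number of induced copies of `P⃗₄` among `T⃗₃`-free
oriented graphs on `n` vertices, every vertex lies in at least `0.19·C(n,3)` induced
copies of `P⃗₄`. -/
theorem extremal_vertex_many_paths :
    ∃ n₀ : ℕ, ∀ n : ℕ, n₀ ≤ n →
      ∀ A : Fin n → Fin n → Prop, IsOriented A → T3Free A →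
        (∀ B : Fin n → Fin n → Prop, IsOriented B → T3Free B →
          numPaths B 4 ≤ numPaths A 4) →
        ∀ x : Fin n, (0.19 : ℝ) * (n.choose 3 : ℝ) ≤ (numPathsThrough A 4 {x} : ℝ) := by
  refine ⟨10000, fun n hn A hA hT hmax x => ?_⟩
  have hcard : Fintype.card (Fin n) = n := Fintype.card_fin n
  -- lower bound on numPaths A 4
  obtain ⟨A₀, hA₀o, hA₀t, hA₀c⟩ := blowup_bound n
  have hN : 5 * (n / 5) ^ 4 ≤ numPaths A 4 := le_trans hA₀c (hmax A₀ hA₀o hA₀t)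
  -- vertex in many paths
  obtain ⟨v, hv⟩ := exists_big_vertex A (by rw [hcard]; omega)
  rw [hcard] at hv
  -- p v ≤ p x + choose 2
  have hkey : numPathsThrough A 4 {v} ≤ numPathsThrough A 4 {x} + n.choose 2 := by
    by_cases hvx : v = x
    · subst hvx; exact Nat.le_add_right _ _
    · obtain ⟨B, hBo, hBt, hB⟩ := clone_bound hA hT v x hvx
      have h1 := hmax B hBo hBt
      have h2 := pair_bound A v x hvx
      rw [hcard] at h2
      omega
  -- arithmetic
  set m := n / 5 with hm
  set N := numPaths A 4 with hNdef
  set pv := numPathsThrough A 4 {v} with hpv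
  set px := numPathsThrough A 4 {x} with hpx
  have h4 : n ≤ 5 * m + 4 := by omega
  -- move to ℝ
  have R1 : (4 : ℝ) * N ≤ n * pv := by exact_mod_cast hv
  have R2 : (pv : ℝ) ≤ px + n.choose 2 := by exact_mod_cast hkey
  have R3 : (5 : ℝ) * (m : ℝ) ^ 4 ≤ N := by exact_mod_cast hN
  have R4 : (n : ℝ) - 4 ≤ 5 * m := by
    have : (n : ℝ) ≤ 5 * m + 4 := by exact_mod_cast h4
    linarith
  have R5 : (n.choose 2 : ℝ) ≤ (n : ℝ) ^ 2 / 2 := by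
    have := Nat.choose_le_pow_div (α := ℝ) 2 n
    norm_num at this ⊢
    exact this
  have R6 : (n.choose 3 : ℝ) ≤ (n : ℝ) ^ 3 / 6 := by
    have := Nat.choose_le_pow_div (α := ℝ) 3 n
    norm_num [Nat.factorial] at this ⊢
    exact this
  have Rn : (10000 : ℝ) ≤ n := by exact_mod_cast hn
  have hn0 : (0 : ℝ) < n := by linarith
  have hm4 : ((n : ℝ) - 4) ^ 4 ≤ 625 * (m : ℝ) ^ 4 := by
    have h0 : (0 : ℝ) ≤ (n : ℝ) - 4 := by linarith
    have := pow_le_pow_left₀ h0 R4 4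
    nlinarith [this]
  have hNbig : (20 : ℝ) * (m : ℝ) ^ 4 ≤ n * px + n * n.choose 2 := by
    have := mul_le_mul_of_nonneg_left R2 (le_of_lt hn0)
    nlinarith [R1, R3]
  have f1 : (10000 : ℝ) * (n : ℝ) ^ 3 ≤ (n : ℝ) ^ 4 := by
    have h := mul_le_mul_of_nonneg_right Rn (pow_nonneg hn0.le 3)
    nlinarith [h]
  have f2 : (10000 : ℝ) * (n : ℝ) ≤ (n : ℝ) ^ 2 := by
    have h := mul_le_mul_of_nonneg_right Rn hn0.le
    nlinarith [h]
  have f3 : (0 : ℝ) ≤ (n : ℝ) ^ 3 := pow_nonneg hn0.le 3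
  have hpoly : (19 / 600 : ℝ) * n ^ 4 + (1 / 2 : ℝ) * n ^ 3 ≤ (4 / 125 : ℝ) * ((n : ℝ) - 4) ^ 4 := by
    have hexp : (4 / 125 : ℝ) * ((n : ℝ) - 4) ^ 4
        = (4 / 125 : ℝ) * ((n:ℝ)^4 - 16*(n:ℝ)^3 + 96*(n:ℝ)^2 - 256*(n:ℝ) + 256) := by ring
    rw [hexp]
    linarith [f1, f2, f3, Rn]
  have hc2n : (n : ℝ) * (n.choose 2) ≤ (n : ℝ) ^ 3 / 2 := by
    have h := mul_le_mul_of_nonneg_left R5 hn0.le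
    nlinarith [h]
  have hm4' : (4 / 125 : ℝ) * ((n : ℝ) - 4) ^ 4 ≤ 20 * (m : ℝ) ^ 4 := by linarith
  have hfinal : (19 / 600 : ℝ) * n ^ 4 ≤ n * px := by
    linarith [hpoly, hm4', hNbig, hc2n]
  have hpx3 : (19 / 600 : ℝ) * n ^ 3 ≤ px := by
    rw [← mul_le_mul_iff_right₀ hn0]
    nlinarith [hfinal]
  linarith [R6, hpx3]
end

section
/- For every integer k ≥ 2 and every oriented graph G on n vertices, the number of induced copies of the directed path P⃗_k in G is at most n^k / (k−1)^{k−1}. Consequently, the inducibility of P⃗_k over all oriented graphs satisfies I(P⃗_k) ≤ k! / (k−1)^{k−1}. -/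
open scoped Classical

lemma my_amgm (k : ℕ) (hk : 1 ≤ k) {a b n : ℝ} (ha : 0 ≤ a) (hb : 0 ≤ b) (hab : a + b ≤ n) :
    a * (b / k) ^ k ≤ (n / (k + 1)) ^ (k + 1) := by
  have hkR : (1:ℝ) ≤ (k:ℝ) := by exact_mod_cast hk
  have hk0 : (0:ℝ) < k := by linarith
  have hk1 : (0:ℝ) < (k:ℝ) + 1 := by linarith
  have hn : 0 ≤ n := le_trans (by linarith) hab
  have hx0 : (0:ℝ) ≤ ((k:ℝ) + 1) * a := by positivity
  have hy0 : (0:ℝ) ≤ (((k:ℝ) + 1) / k) * b := by positivity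
  have hw : 1 / ((k:ℝ)+1) + (k:ℝ) / ((k:ℝ)+1) = 1 := by
    rw [← add_div, add_comm, div_self (ne_of_gt hk1)]
  have h := Real.geom_mean_le_arith_mean2_weighted (p₁ := ((k:ℝ) + 1) * a)
    (p₂ := (((k:ℝ) + 1) / k) * b) (by positivity) (by positivity) hx0 hy0 hw
  have hsum : 1 / ((k:ℝ)+1) * (((k:ℝ) + 1) * a) + (k:ℝ) / ((k:ℝ)+1) * ((((k:ℝ) + 1) / k) * b)
      = a + b := by field_simp
  rw [hsum] at h
  have h1 : ((((k:ℝ) + 1) * a) ^ (1 / ((k:ℝ)+1)) * ((((k:ℝ) + 1) / k) * b) ^ ((k:ℝ) / ((k:ℝ)+1)))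
      ^ (k+1) = (((k:ℝ) + 1) * a) * ((((k:ℝ) + 1) / k) * b) ^ k := by
    rw [mul_pow, ← Real.rpow_natCast ((((k:ℝ) + 1) * a) ^ (1 / ((k:ℝ)+1))) (k+1),
      ← Real.rpow_natCast (((((k:ℝ) + 1) / k) * b) ^ ((k:ℝ) / ((k:ℝ)+1))) (k+1),
      ← Real.rpow_mul hx0, ← Real.rpow_mul hy0]
    have e1 : 1 / ((k:ℝ)+1) * ((k + 1 : ℕ) : ℝ) = 1 := by push_cast; field_simp
    have e2 : (k:ℝ) / ((k:ℝ)+1) * ((k + 1 : ℕ) : ℝ) = (k:ℕ) := by push_cast; field_simp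
    rw [e1, e2, Real.rpow_one, Real.rpow_natCast]
  have hkey : (((k:ℝ) + 1) * a) * ((((k:ℝ) + 1) / k) * b) ^ k ≤ n ^ (k + 1) := by
    rw [← h1]
    calc _ ≤ (a + b) ^ (k+1) := pow_le_pow_left₀ (by positivity) h _
      _ ≤ n ^ (k+1) := pow_le_pow_left₀ (by linarith) hab _
  have hfinal : a * (b / k) ^ k =
      ((((k:ℝ) + 1) * a) * ((((k:ℝ) + 1) / k) * b) ^ k) / ((k:ℝ) + 1) ^ (k + 1) := by
    rw [mul_pow, div_pow, div_pow, pow_succ]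
    field_simp
  rw [hfinal, div_pow]
  exact div_le_div_of_nonneg_right hkey (by positivity) |>.trans_eq rfl


def myPathCond {V : Type*} (A : V → V → Prop) {m : ℕ} (f : Fin m → V) : Prop :=
  ∀ i j, A (f i) (f j) ↔ (j : ℕ) = (i : ℕ) + 1

noncomputable def mySC {V : Type*} [Fintype V] (A : V → V → Prop) (k : ℕ) (u : V)
    (s : Finset V) : ℕ :=
  (Finset.univ.filter fun f : Fin (k+1) → V =>
    f 0 = u ∧ (∀ i, i ≠ 0 → f i ∈ s) ∧ Function.Injective f ∧ myPathCond A f).card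


lemma mySC_le {V : Type*} [Fintype V] (A : V → V → Prop) (k : ℕ) (hk : 1 ≤ k) :
    ∀ (u : V) (s : Finset V), (mySC A k u s : ℝ) ≤ ((s.card : ℝ) / k) ^ k := by
  induction k, hk using Nat.le_induction with
  | base =>
    intro u s
    have hle : mySC A 1 u s ≤ s.card := by
      apply Finset.card_le_card_of_injOn (fun f => f 1)
      · intro f hf
        replace hf := Finset.mem_coe.mp hf
        simp only [Finset.mem_filter, Finset.mem_univ, true_and] at hf
        exact hf.2.1 1 (by decide)
      · intro f hf g hg hfg
        simp only [Finset.coe_filter, Set.mem_setOf_eq, Finset.mem_univ, true_and] at hf hg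
        funext i
        induction i using Fin.cases with
        | zero => rw [hf.1, hg.1]
        | succ j =>
          have hj : j = 0 := Subsingleton.elim j 0
          rw [hj, Fin.succ_zero_eq_one]
          exact hfg
    simp only [Nat.cast_one, div_one, pow_one]
    exact_mod_cast hle
  | succ k hk IH =>
    intro u s
    set T : Finset V := s.filter (fun v => A u v) with hT
    set s' : Finset V := s.filter (fun w => ¬ A u w ∧ ¬ A w u) with hs'
    set F : Finset (Fin (k+2) → V) := Finset.univ.filter (fun f : Fin (k+2) → V =>
      f 0 = u ∧ (∀ i, i ≠ 0 → f i ∈ s) ∧ Function.Injective f ∧ myPathCond A f) with hF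
    have hScard : mySC A (k+1) u s = F.card := rfl
    have hfib : F.card = ∑ v ∈ T, (F.filter (fun f => f 1 = v)).card := by
      apply Finset.card_eq_sum_card_fiberwise
      intro f hf
      replace hf := Finset.mem_coe.mp hf
      simp only [hF, Finset.mem_filter, Finset.mem_univ, true_and] at hf
      obtain ⟨h0, hmem, hinj, hpc⟩ := hf
      refine Finset.mem_coe.mpr ?_
      rw [hT, Finset.mem_filter]
      refine ⟨hmem 1 (by simp), ?_⟩
      have := (hpc 0 1).mpr (by simp)
      rwa [h0] at this
    have hfiber : ∀ v ∈ T, ((F.filter (fun f => f 1 = v)).card : ℕ) ≤ mySC A k v s' := by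
      intro v hv
      apply Finset.card_le_card_of_injOn (fun f => f ∘ Fin.succ)
      · intro f hf
        replace hf := Finset.mem_coe.mp hf
        simp only [hF, Finset.mem_filter, Finset.mem_univ, true_and] at hf
        obtain ⟨⟨h0, hmem, hinj, hpc⟩, h1⟩ := hf
        refine Finset.mem_coe.mpr ?_
        simp only [Finset.mem_filter, Finset.mem_univ, true_and]
        refine ⟨by simpa [Fin.succ_zero_eq_one] using h1, ?_, hinj.comp (Fin.succ_injective _), ?_⟩
        · intro i hi
          have hine : i.succ ≠ 0 := Fin.succ_ne_zero i
          have hival : (i : ℕ) ≠ 0 := fun h => hi (Fin.ext h)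
          rw [hs', Finset.mem_filter]
          refine ⟨hmem i.succ hine, ?_, ?_⟩
          · intro hA
            have h2 := hpc 0 i.succ
            simp only [h0] at h2
            have := h2.mp hA
            simp only [Fin.val_succ, Fin.val_zero] at this
            exact hival (Nat.succ_injective this)
          · intro hA
            have h2 := hpc i.succ 0
            simp only [h0] at h2
            have := h2.mp hA
            simp only [Fin.val_succ, Fin.val_zero] at this
            exact (Nat.succ_ne_zero _) this.symm
        · intro i j
          have := hpc i.succ j.succ
          simpa [Fin.val_succ] using this
      · intro f hf g hg hfg
        simp only [hF, Finset.coe_filter, Finset.mem_filter, Set.mem_setOf_eq, Finset.mem_univ,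
          true_and] at hf hg
        funext i
        induction i using Fin.cases with
        | zero => rw [hf.1.1, hg.1.1]
        | succ i => exact congrFun hfg i
    have hdisj : Disjoint T s' := by
      rw [Finset.disjoint_left]
      intro v hvT hvs'
      rw [hT, Finset.mem_filter] at hvT
      rw [hs', Finset.mem_filter] at hvs'
      exact hvs'.2.1 hvT.2
    have hcards : T.card + s'.card ≤ s.card := by
      rw [← Finset.card_union_of_disjoint hdisj]
      apply Finset.card_le_card
      apply Finset.union_subset (Finset.filter_subset _ _) (Finset.filter_subset _ _)
    calc (mySC A (k+1) u s : ℝ) = (F.card : ℝ) := by rw [hScard]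
      _ = ∑ v ∈ T, ((F.filter (fun f => f 1 = v)).card : ℝ) := by rw [hfib]; push_cast; ring
      _ ≤ ∑ v ∈ T, ((s'.card : ℝ) / k) ^ k := by
          apply Finset.sum_le_sum
          intro v hv
          calc ((F.filter (fun f => f 1 = v)).card : ℝ) ≤ (mySC A k v s' : ℝ) := by
                exact_mod_cast hfiber v hv
            _ ≤ ((s'.card : ℝ) / k) ^ k := IH v s'
      _ = (T.card : ℝ) * ((s'.card : ℝ) / k) ^ k := by rw [Finset.sum_const]; simp [nsmul_eq_mul]
      _ ≤ ((s.card : ℝ) / ((k:ℝ) + 1)) ^ (k + 1) := by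
          apply my_amgm k hk (by positivity) (by positivity)
          exact_mod_cast hcards
      _ = ((s.card : ℝ) / ((k+1 : ℕ) : ℝ)) ^ (k + 1) := by push_cast; ring

lemma numPaths_le {V : Type*} [Fintype V] [DecidableEq V] (A : V → V → Prop) (m : ℕ) :
    (numPaths A (m+2) : ℝ) ≤
      (Fintype.card V : ℝ) ^ (m+2) / ((m:ℝ) + 1) ^ (m+1) := by
  set n := Fintype.card V with hn
  have hrhs : (0:ℝ) ≤ (n : ℝ) ^ (m+2) / ((m:ℝ) + 1) ^ (m+1) := by positivity
  by_cases hne : (Finset.univ.filter fun S : Finset V => IsInducedPath A (m+2) S).Nonempty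
  case neg =>
    rw [Finset.not_nonempty_iff_eq_empty] at hne
    rw [numPaths, hne]
    simpa using hrhs
  case pos =>
    obtain ⟨S₀, hS₀⟩ := hne
    have hS₀' : IsInducedPath A (m+2) S₀ := (Finset.mem_filter.mp hS₀).2
    have hVne : Nonempty V := ⟨hS₀'.choose 0⟩
    set G : Finset (Fin (m+2) → V) := Finset.univ.filter
      (fun f : Fin (m+2) → V => Function.Injective f ∧ myPathCond A f) with hG
    -- numPaths ≤ G.card
    have h1 : numPaths A (m+2) ≤ G.card := by
      apply Finset.card_le_card_of_injOn
        (fun S => if h : IsInducedPath A (m+2) S then h.choose else fun _ => Classical.arbitrary V)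
      · intro S hS
        have h := (Finset.mem_filter.mp hS).2
        refine Finset.mem_coe.mpr ?_
        simp only [dif_pos h, hG, Finset.mem_filter, Finset.mem_univ, true_and]
        exact ⟨h.choose_spec.1, h.choose_spec.2.2⟩
      · intro S hS S' hS' heq
        have h := (Finset.mem_filter.mp (Finset.mem_coe.mp hS)).2
        have h' := (Finset.mem_filter.mp (Finset.mem_coe.mp hS')).2
        simp only [dif_pos h, dif_pos h'] at heq
        ext v
        rw [h.choose_spec.2.1 v, h'.choose_spec.2.1 v, heq]
    -- fiberwise
    have h2 : G.card = ∑ u : V, (G.filter (fun f => f 0 = u)).card :=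
      Finset.card_eq_sum_card_fiberwise (fun f _ => Finset.mem_univ _)
    have h3 : ∀ u : V, (G.filter (fun f => f 0 = u)).card ≤ mySC A (m+1) u (Finset.univ.erase u) := by
      intro u
      apply Finset.card_le_card
      intro f hf
      simp only [hG, Finset.mem_filter, Finset.mem_univ, true_and] at hf
      obtain ⟨⟨hinj, hpc⟩, h0⟩ := hf
      simp only [mySC, Finset.mem_filter, Finset.mem_univ, true_and]
      refine ⟨h0, ?_, hinj, hpc⟩
      intro i hi
      rw [Finset.mem_erase]
      exact ⟨fun hc => hi (hinj (hc.trans h0.symm)), Finset.mem_univ _⟩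
    have h4 : ∀ u : V, (mySC A (m+1) u (Finset.univ.erase u) : ℝ) ≤ ((n:ℝ)/((m:ℝ)+1)) ^ (m+1) := by
      intro u
      calc (mySC A (m+1) u (Finset.univ.erase u) : ℝ)
          ≤ (((Finset.univ.erase u).card : ℝ) / (m+1:ℕ)) ^ (m+1) :=
            mySC_le A (m+1) (Nat.succ_le_succ (Nat.zero_le m)) u _
        _ ≤ ((n:ℝ)/((m:ℝ)+1)) ^ (m+1) := by
            apply pow_le_pow_left₀ (by positivity)
            rw [show ((m+1:ℕ):ℝ) = (m:ℝ)+1 by push_cast; ring]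
            refine div_le_div_of_nonneg_right ?_ (by positivity)
            calc (((Finset.univ.erase u).card : ℕ) : ℝ) ≤ ((Finset.univ.card : ℕ) : ℝ) := by
                  exact_mod_cast Finset.card_le_card (Finset.erase_subset _ _)
              _ = (n:ℝ) := by rw [hn, Finset.card_univ]
    calc (numPaths A (m+2) : ℝ) ≤ (G.card : ℝ) := by exact_mod_cast h1
      _ = ∑ u : V, ((G.filter (fun f => f 0 = u)).card : ℝ) := by rw [h2]; push_cast; ring
      _ ≤ ∑ u : V, ((n:ℝ)/((m:ℝ)+1)) ^ (m+1) := by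
          apply Finset.sum_le_sum
          intro u _
          calc ((G.filter (fun f => f 0 = u)).card : ℝ) ≤ (mySC A (m+1) u (Finset.univ.erase u) : ℝ) := by
                exact_mod_cast h3 u
            _ ≤ _ := h4 u
      _ = (n : ℝ) * ((n:ℝ)/((m:ℝ)+1)) ^ (m+1) := by
          rw [Finset.sum_const, Finset.card_univ, ← hn, nsmul_eq_mul]
      _ = (n : ℝ) ^ (m+2) / ((m:ℝ) + 1) ^ (m+1) := by
          rw [div_pow, pow_succ]
          field_simp
          ring

open Filter in

lemma tendsto_pow_div_choose (k : ℕ) :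
    Tendsto (fun n : ℕ => (n:ℝ) ^ k / (n.choose k : ℝ)) atTop
      (nhds (Nat.factorial k : ℝ)) := by
  have hprod : Tendsto (fun n : ℕ => ∏ i ∈ Finset.range k, (n:ℝ) / ((n:ℝ) - (i:ℝ))) atTop
      (nhds 1) := by
    have : (1:ℝ) = ∏ i ∈ Finset.range k, (1:ℝ) := by simp
    rw [this]
    apply tendsto_finset_prod
    intro i _
    have h1 : Tendsto (fun n : ℕ => (n:ℝ) - (i:ℝ)) atTop atTop :=
      tendsto_atTop_add_const_right atTop (-(i:ℝ)) tendsto_natCast_atTop_atTop |>.congr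
        (fun n => by ring)
    have h2 : Tendsto (fun n : ℕ => (i:ℝ) / ((n:ℝ) - (i:ℝ))) atTop (nhds 0) :=
      Tendsto.div_atTop tendsto_const_nhds h1
    have h3 : Tendsto (fun n : ℕ => 1 + (i:ℝ) / ((n:ℝ) - (i:ℝ))) atTop (nhds 1) := by
      have := Tendsto.const_add (1:ℝ) h2
      simpa using this
    apply h3.congr'
    filter_upwards [eventually_ge_atTop (i+1)] with n hn
    have hni : (i:ℝ) < (n:ℝ) := by exact_mod_cast Nat.lt_of_succ_le hn
    have : (n:ℝ) - (i:ℝ) ≠ 0 := by linarith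
    field_simp
    ring
  have heq : ∀ᶠ n : ℕ in atTop, (Nat.factorial k : ℝ) * ∏ i ∈ Finset.range k, (n:ℝ) / ((n:ℝ) - (i:ℝ))
      = (n:ℝ) ^ k / (n.choose k : ℝ) := by
    filter_upwards [eventually_ge_atTop k] with n hn
    have hkey : (Nat.factorial k : ℝ) * (n.choose k : ℝ) = ∏ i ∈ Finset.range k, ((n:ℝ) - (i:ℝ)) := by
      have h1 : (Nat.factorial k) * (n.choose k) = n.descFactorial k :=
        (Nat.descFactorial_eq_factorial_mul_choose n k).symm
      have h2 : n.descFactorial k = ∏ i ∈ Finset.range k, (n - i) :=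
        Nat.descFactorial_eq_prod_range n k
      have : ((Nat.factorial k) * (n.choose k) : ℕ) = ((∏ i ∈ Finset.range k, (n - i) : ℕ)) := by
        rw [h1, h2]
      calc (Nat.factorial k : ℝ) * (n.choose k : ℝ)
          = (((Nat.factorial k) * (n.choose k) : ℕ) : ℝ) := by push_cast; ring
        _ = ((∏ i ∈ Finset.range k, (n - i) : ℕ) : ℝ) := by rw [this]
        _ = ∏ i ∈ Finset.range k, ((n:ℝ) - (i:ℝ)) := by
            push_cast [Nat.cast_prod]
            apply Finset.prod_congr rfl
            intro i hi
            rw [Nat.cast_sub (le_trans (Finset.mem_range.mp hi).le hn)]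
    have hch : (n.choose k : ℝ) ≠ 0 := Nat.cast_ne_zero.mpr (Nat.choose_pos hn).ne'
    have hppos : (0:ℝ) < ∏ i ∈ Finset.range k, ((n:ℝ) - (i:ℝ)) := by
      apply Finset.prod_pos
      intro i hi
      have : (i:ℝ) < (n:ℝ) := by
        exact_mod_cast lt_of_lt_of_le (Finset.mem_range.mp hi) hn
      linarith
    have hpne : (∏ i ∈ Finset.range k, ((n:ℝ) - (i:ℝ))) ≠ 0 := ne_of_gt hppos
    rw [Finset.prod_div_distrib, Finset.prod_const, Finset.card_range]
    field_simp
    linear_combination ((n:ℝ)^k) * hkey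
  have hlim : Tendsto (fun n : ℕ => (Nat.factorial k : ℝ) *
      ∏ i ∈ Finset.range k, (n:ℝ) / ((n:ℝ) - (i:ℝ))) atTop (nhds (Nat.factorial k : ℝ)) := by
    have := hprod.const_mul (Nat.factorial k : ℝ)
    simpa using this
  exact Tendsto.congr' heq hlim

/-- Every oriented graph on `n` vertices has at most
`n^k/(k−1)^{k−1}` induced copies of `P⃗ₖ`; consequently `I(P⃗ₖ) ≤ k!/(k−1)^{k−1}`. -/
theorem inducibility_Pk_upper (k : ℕ) (hk : 2 ≤ k) :
    (∀ (n : ℕ) (A : Fin n → Fin n → Prop), IsOriented A →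
      (numPaths A k : ℝ) ≤ (n : ℝ) ^ k / ((k : ℝ) - 1) ^ (k - 1)) ∧
    Filter.atTop.limsup (fun n : ℕ => maxDensityAll k n) ≤
      (Nat.factorial k : ℝ) / ((k : ℝ) - 1) ^ (k - 1) := by

  obtain ⟨m, hm⟩ : ∃ m, k = m + 2 := ⟨k - 2, by omega⟩
  subst hm
  have hcast : ((m+2:ℕ):ℝ) - 1 = (m:ℝ) + 1 := by push_cast; ring
  have hsub : (m+2) - 1 = m+1 := rfl
  have part1 : ∀ (n : ℕ) (A : Fin n → Fin n → Prop), IsOriented A →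
      (numPaths A (m+2) : ℝ) ≤ (n : ℝ) ^ (m+2) / (((m+2:ℕ) : ℝ) - 1) ^ ((m+2) - 1) := by
    intro n A _
    rw [hsub, hcast]
    have h := numPaths_le A m (V := Fin n)
    rwa [Fintype.card_fin] at h
  refine ⟨part1, ?_⟩
  set K : ℝ := (((m+2:ℕ) : ℝ) - 1) ^ ((m+2) - 1) with hK
  have hKpos : 0 < K := by rw [hK, hcast]; positivity
  set B : ℕ → ℝ := fun n => (1 / K) * ((n:ℝ) ^ (m+2) / (n.choose (m+2) : ℝ)) with hB
  have hBnonneg : ∀ n, 0 ≤ B n := by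
    intro n
    rw [hB]
    positivity
  have hdens : ∀ (n : ℕ) (A : Fin n → Fin n → Prop), IsOriented A →
      pathDensity A (m+2) ≤ B n := by
    intro n A hA
    have h1 : pathDensity A (m+2) = (numPaths A (m+2) : ℝ) / ((n.choose (m+2) : ℕ) : ℝ) := by
      rw [pathDensity, Fintype.card_fin]
    have h2 : B n = ((n:ℝ) ^ (m+2) / K) / (n.choose (m+2) : ℝ) := by
      simp only [hB]
      rw [div_mul_div_comm, one_mul, div_div]
    rw [h1, h2]
    rcases Nat.eq_zero_or_pos (n.choose (m+2)) with hc | hc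
    · rw [hc]
      simp
    · exact div_le_div_of_nonneg_right (part1 n A hA)
        (by positivity : (0:ℝ) ≤ (n.choose (m+2) : ℝ))
  have hle : ∀ n, maxDensityAll (m+2) n ≤ B n := by
    intro n
    apply Real.sSup_le
    · rintro d ⟨A, hA, rfl⟩
      exact hdens n A hA
    · exact hBnonneg n
  have hbdd : ∀ n : ℕ, BddAbove {d : ℝ | ∃ A : Fin n → Fin n → Prop,
      IsOriented A ∧ d = pathDensity A (m+2)} := by
    intro n
    refine ⟨B n, ?_⟩
    rintro d ⟨A, hA, rfl⟩
    exact hdens n A hA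
  have h0 : ∀ n, 0 ≤ maxDensityAll (m+2) n := by
    intro n
    have hmem : pathDensity (fun _ _ : Fin n => False) (m+2) ∈ {d : ℝ |
        ∃ A : Fin n → Fin n → Prop, IsOriented A ∧ d = pathDensity A (m+2)} :=
      ⟨fun _ _ => False, fun a b h => h.elim, rfl⟩
    have hd0 : 0 ≤ pathDensity (fun _ _ : Fin n => False) (m+2) := by
      rw [pathDensity]
      positivity
    exact le_trans hd0 (le_csSup (hbdd n) hmem)
  have hTend : Filter.Tendsto B Filter.atTop (nhds ((1 / K) * (Nat.factorial (m+2) : ℝ))) :=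
    (tendsto_pow_div_choose (m+2)).const_mul (1 / K)
  calc Filter.atTop.limsup (fun n : ℕ => maxDensityAll (m+2) n)
      ≤ Filter.atTop.limsup B :=
        Filter.limsup_le_limsup (Filter.Eventually.of_forall hle)
          (Filter.isCoboundedUnder_le_of_le Filter.atTop h0)
          hTend.isBoundedUnder_le
    _ = (1 / K) * (Nat.factorial (m+2) : ℝ) := hTend.limsup_eq
    _ = (Nat.factorial (m+2) : ℝ) / K := by ring
end

section
/- For every integer k ≥ 2 and every T⃗₃-free oriented graph G on n vertices, the number of induced copies of the directed path P⃗_k in G is at most n^k / k^{k−1}. Consequently, the inducibility of P⃗_k in the family T⃗ of T⃗₃-free oriented graphs satisfies I(P⃗_k, T⃗) ≤ k! / k^{k−1}. -/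
open scoped Classical

namespace Stmt12Aux

open Finset

/- ## Analytic lemmas -/

/-- tangent line: `Q^(m+1) + (m+1) Q^m (P-Q) ≤ P^(m+1)` for `P, Q ≥ 0`. -/
lemma tangent_line (m : ℕ) : ∀ P Q : ℝ, 0 ≤ P → 0 ≤ Q →
    Q^(m+1) + ((m:ℝ)+1) * Q^m * (P - Q) ≤ P^(m+1) := by
  induction m with
  | zero => intro P Q hP hQ; simp
  | succ m ih =>
    intro P Q hP hQ
    have h1 := ih P Q hP hQ
    have hmul : Q * (Q^(m+1) + ((m:ℝ)+1) * Q^m * (P - Q)) ≤ Q * P^(m+1) :=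
      mul_le_mul_of_nonneg_left h1 hQ
    have key : 0 ≤ (P^(m+1) - Q^(m+1)) * (P - Q) := by
      rcases le_total Q P with h | h
      · have := pow_le_pow_left₀ hQ h (m+1); nlinarith
      · have := pow_le_pow_left₀ hP h (m+1); nlinarith
    have h2 : Q^(m+1+1) + ((m:ℝ)+1) * Q^(m+1) * (P - Q) ≤ Q * P^(m+1) := by
      calc Q^(m+1+1) + ((m:ℝ)+1) * Q^(m+1) * (P - Q)
          = Q * (Q^(m+1) + ((m:ℝ)+1) * Q^m * (P - Q)) := by ring
        _ ≤ Q * P^(m+1) := hmul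
    have key' : Q^(m+1) * (P - Q) ≤ P^(m+1) * (P - Q) := by nlinarith [key]
    have e4 : P^(m+1+1) = Q * P^(m+1) + P^(m+1) * (P - Q) := by ring
    push_cast
    linarith [h2, key', e4]

/-- AM–GM master: `x y^d (d+1)^(d+1) ≤ (x + d y)^(d+1)` for `x, y ≥ 0`. -/
lemma master_amgm (d : ℕ) {x y : ℝ} (hx : 0 ≤ x) (hy : 0 ≤ y) :
    x * y^d * ((d:ℝ)+1)^(d+1) ≤ (x + (d:ℝ)*y)^(d+1) := by
  induction d with
  | zero => simp
  | succ d ih =>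
    have hP : (0:ℝ) ≤ ((d:ℝ)+1) * (x + ((d:ℝ)+1)*y) := by positivity
    have hQ : (0:ℝ) ≤ ((d:ℝ)+2) * (x + (d:ℝ)*y) := by positivity
    have tl := tangent_line (d+1) (((d:ℝ)+1) * (x + ((d:ℝ)+1)*y)) (((d:ℝ)+2) * (x + (d:ℝ)*y)) hP hQ
    push_cast at tl
    have hPQ : ((d:ℝ)+1) * (x + ((d:ℝ)+1)*y) - ((d:ℝ)+2) * (x + (d:ℝ)*y) = y - x := by ring
    rw [hPQ] at tl
    have e1 : (((d:ℝ)+2) * (x + (d:ℝ)*y))^(d+1+1)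
        + ((d:ℝ)+1+1) * (((d:ℝ)+2) * (x + (d:ℝ)*y))^(d+1) * (y - x)
        = (((d:ℝ)+2) * (x + (d:ℝ)*y))^(d+1) * ( ((d:ℝ)+2)*((d:ℝ)+1)*y ) := by ring
    rw [e1] at tl
    rw [mul_pow, mul_pow] at tl
    -- tl : (d+2)^(d+1) (x+dy)^(d+1) * ((d+2)(d+1) y) ≤ (d+1)^(d+1+1) (x+(d+1)y)^(d+1+1)
    have hd1 : (0:ℝ) < (d:ℝ)+1 := by positivity
    have tl' : ((d:ℝ)+2)^(d+1+1) * ((x + (d:ℝ)*y)^(d+1) * y)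
        ≤ ((d:ℝ)+1)^(d+1) * (x + ((d:ℝ)+1)*y)^(d+1+1) := by
      have hpow : ((d:ℝ)+1)^(d+1+1) = ((d:ℝ)+1) * ((d:ℝ)+1)^(d+1) := by ring
      have hpow2 : ((d:ℝ)+2)^(d+1+1) = ((d:ℝ)+2) * ((d:ℝ)+2)^(d+1) := by ring
      rw [hpow] at tl
      apply le_of_mul_le_mul_left _ hd1
      calc ((d:ℝ)+1) * (((d:ℝ)+2)^(d+1+1) * ((x + (d:ℝ)*y)^(d+1) * y))
          = ((d:ℝ)+2)^(d+1) * (x + (d:ℝ)*y)^(d+1) * (((d:ℝ)+2) * ((d:ℝ)+1) * y) := by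
            rw [hpow2]; ring
        _ ≤ ((d:ℝ)+1) * (((d:ℝ)+1)^(d+1) * (x + ((d:ℝ)+1)*y)^(d+1+1)) := by
            calc ((d:ℝ)+2)^(d+1) * (x + (d:ℝ)*y)^(d+1) * (((d:ℝ)+2) * ((d:ℝ)+1) * y)
                ≤ ((d:ℝ)+1) * ((d:ℝ)+1)^(d+1) * (x + ((d:ℝ)+1)*y)^(d+1+1) := tl
              _ = ((d:ℝ)+1) * (((d:ℝ)+1)^(d+1) * (x + ((d:ℝ)+1)*y)^(d+1+1)) := by ring
    -- combine with ih
    have ihy : (x * y^d * ((d:ℝ)+1)^(d+1)) * (((d:ℝ)+2)^(d+1+1) * y)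
        ≤ (x + (d:ℝ)*y)^(d+1) * (((d:ℝ)+2)^(d+1+1) * y) := by
      apply mul_le_mul_of_nonneg_right ih; positivity
    have pos1 : (0:ℝ) < ((d:ℝ)+1)^(d+1) := by positivity
    have final : x * y^(d+1) * ((d:ℝ)+2)^(d+1+1) * ((d:ℝ)+1)^(d+1)
        ≤ (x + ((d:ℝ)+1)*y)^(d+1+1) * ((d:ℝ)+1)^(d+1) := by
      calc x * y^(d+1) * ((d:ℝ)+2)^(d+1+1) * ((d:ℝ)+1)^(d+1)
          = (x * y^d * ((d:ℝ)+1)^(d+1)) * (((d:ℝ)+2)^(d+1+1) * y) := by ring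
        _ ≤ (x + (d:ℝ)*y)^(d+1) * (((d:ℝ)+2)^(d+1+1) * y) := ihy
        _ = ((d:ℝ)+2)^(d+1+1) * ((x + (d:ℝ)*y)^(d+1) * y) := by ring
        _ ≤ ((d:ℝ)+1)^(d+1) * (x + ((d:ℝ)+1)*y)^(d+1+1) := tl'
        _ = (x + ((d:ℝ)+1)*y)^(d+1+1) * ((d:ℝ)+1)^(d+1) := by ring
    have h := le_of_mul_le_mul_right final pos1
    push_cast
    have e : ((d:ℝ)+1+1) = ((d:ℝ)+2) := by ring
    rw [e]
    exact h

/-- tree AM-GM : `b ((M-b)/r)^r ≤ (M/(r+1))^(r+1)` for `0 ≤ b ≤ M`. -/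
lemma amgm_tree (r : ℕ) {b M : ℝ} (hb : 0 ≤ b) (hbM : b ≤ M) :
    b * ((M-b)/r)^r ≤ (M/((r:ℝ)+1))^(r+1) := by
  rcases Nat.eq_zero_or_pos r with h0 | hr
  · subst h0; simpa using hbM
  · have hrR : (0:ℝ) < r := by exact_mod_cast hr
    have hy : (0:ℝ) ≤ (M-b)/r := div_nonneg (by linarith) hrR.le
    have h := master_amgm r hb hy
    have hxy : b + (r:ℝ)*((M-b)/r) = M := by field_simp; ring
    rw [hxy] at h
    have e2 : (M/((r:ℝ)+1))^(r+1) = M^(r+1)/((r:ℝ)+1)^(r+1) := div_pow _ _ _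
    rw [e2, le_div_iff₀ (by positivity)]
    exact h

/-- peak AM-GM: `u (M-u)^d (d+1)^(d+1) ≤ d^d M^(d+1)` for `0 ≤ u ≤ M`, `1 ≤ d`. -/
lemma amgm_peak (d : ℕ) (hd : 1 ≤ d) {u M : ℝ} (hu : 0 ≤ u) (huM : u ≤ M) :
    u * (M-u)^d * ((d:ℝ)+1)^(d+1) ≤ (d:ℝ)^d * M^(d+1) := by
  have hdR : (0:ℝ) < d := by exact_mod_cast hd
  have hy : (0:ℝ) ≤ (M-u)/d := div_nonneg (by linarith) hdR.le
  have h := master_amgm d hu hy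
  have hxy : u + (d:ℝ)*((M-u)/d) = M := by field_simp; ring
  rw [hxy] at h
  have e : ((M-u)/d)^d = (M-u)^d / (d:ℝ)^d := div_pow _ _ _
  rw [e] at h
  have hdd : (0:ℝ) < (d:ℝ)^d := pow_pos hdR d
  have h2 := mul_le_mul_of_nonneg_left h hdd.le
  calc u * (M-u)^d * ((d:ℝ)+1)^(d+1)
      = (d:ℝ)^d * (u * ((M-u)^d / (d:ℝ)^d) * ((d:ℝ)+1)^(d+1)) := by
        field_simp
    _ ≤ (d:ℝ)^d * M^(d+1) := h2

/-- peak AM-GM (mirrored): `u^d (M-u) (d+1)^(d+1) ≤ d^d M^(d+1)` for `0 ≤ u ≤ M`, `1 ≤ d`. -/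
lemma amgm_peak' (d : ℕ) (hd : 1 ≤ d) {u M : ℝ} (hu : 0 ≤ u) (huM : u ≤ M) :
    u^d * (M-u) * ((d:ℝ)+1)^(d+1) ≤ (d:ℝ)^d * M^(d+1) := by
  have hdR : (0:ℝ) < d := by exact_mod_cast hd
  have hy : (0:ℝ) ≤ u/d := div_nonneg hu hdR.le
  have h := master_amgm d (x := M - u) (y := u/d) (by linarith) hy
  have hxy : (M - u) + (d:ℝ)*(u/d) = M := by field_simp; ring
  rw [hxy] at h
  have e : (u/d)^d = u^d / (d:ℝ)^d := div_pow _ _ _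
  rw [e] at h
  have hdd : (0:ℝ) < (d:ℝ)^d := pow_pos hdR d
  have h2 := mul_le_mul_of_nonneg_left h hdd.le
  calc u^d * (M-u) * ((d:ℝ)+1)^(d+1)
      = (d:ℝ)^d * ((M-u) * (u^d / (d:ℝ)^d) * ((d:ℝ)+1)^(d+1)) := by
        field_simp
    _ ≤ (d:ℝ)^d * M^(d+1) := h2

/-- KEY: `(d+2)^(d+1) ≤ 4 (1-κ)^d (d+1)^(d+1)` with `κ = d^d/(d+1)^(d+1)`. -/
lemma key_ineq (d : ℕ) (hd : 1 ≤ d) :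
    ((d:ℝ)+2)^(d+1) ≤ 4 * (1 - (d:ℝ)^d/((d:ℝ)+1)^(d+1))^d * ((d:ℝ)+1)^(d+1) := by
  rcases le_or_gt d 19 with hsmall | hbig
  · interval_cases d <;> norm_num
  · -- d ≥ 20
    have hd20 : (20:ℝ) ≤ d := by exact_mod_cast hbig
    set κ : ℝ := (d:ℝ)^d/((d:ℝ)+1)^(d+1) with hκdef
    have hden : (0:ℝ) < ((d:ℝ)+1)^(d+1) := by positivity
    have hκ0 : 0 ≤ κ := by positivity
    -- dκ = (d/(d+1))^(d+1)
    have hdκ_eq : (d:ℝ) * κ = ((d:ℝ)/((d:ℝ)+1))^(d+1) := by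
      rw [hκdef, div_pow]
      field_simp
      ring
    have hfrac : (d:ℝ)/((d:ℝ)+1) ≤ Real.exp (-(1/((d:ℝ)+1))) := by
      have h := Real.add_one_le_exp (-(1/((d:ℝ)+1)))
      have e : -(1/((d:ℝ)+1)) + 1 = (d:ℝ)/((d:ℝ)+1) := by field_simp; ring
      linarith [h, e.ge]
    have hfrac0 : (0:ℝ) ≤ (d:ℝ)/((d:ℝ)+1) := by positivity
    have hdκ : (d:ℝ) * κ ≤ Real.exp (-1) := by
      rw [hdκ_eq]
      calc ((d:ℝ)/((d:ℝ)+1))^(d+1) ≤ (Real.exp (-(1/((d:ℝ)+1))))^(d+1) :=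
            pow_le_pow_left₀ hfrac0 hfrac _
        _ = Real.exp ((d+1 : ℕ) * (-(1/((d:ℝ)+1)))) := by rw [← Real.exp_nat_mul]
        _ = Real.exp (-1) := by
            congr 1
            push_cast
            field_simp
    have hE : Real.exp (-1) ≤ 0.3678794412 := by
      rw [Real.exp_neg]
      rw [inv_le_comm₀ (Real.exp_pos 1) (by norm_num)]
      calc (0.3678794412:ℝ)⁻¹ ≤ 2.7182818283 := by norm_num
        _ ≤ Real.exp 1 := (Real.exp_one_gt_d9).le
    have hκsmall : κ ≤ 0.3678794412/20 := by
      have h1 : κ * (d:ℝ) ≤ 0.3678794412 := by rw [mul_comm]; linarith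
      have h2 : κ * 20 ≤ κ * (d:ℝ) := by
        apply mul_le_mul_of_nonneg_left hd20 hκ0
      rw [div_eq_mul_inv]
      nlinarith
    have h1κ : (0.98160602794:ℝ) ≤ 1 - κ := by nlinarith
    have h1κpos : (0:ℝ) < 1 - κ := by linarith
    have ht : (d:ℝ)*κ/(1-κ) ≤ 3/8 := by
      calc (d:ℝ)*κ/(1-κ) ≤ 0.3678794412/0.98160602794 := by
            apply div_le_div₀ (by norm_num) (by linarith) (by norm_num) h1κ
        _ ≤ 3/8 := by norm_num
    -- (d+2)^(d+1) ≤ exp 1 * (d+1)^(d+1)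
    have hexp1 : ((d:ℝ)+2)^(d+1) ≤ Real.exp 1 * ((d:ℝ)+1)^(d+1) := by
      have e : (d:ℝ)+2 = ((d:ℝ)+1) * (1 + 1/((d:ℝ)+1)) := by
        field_simp
        ring
      have h1 : (1:ℝ) + 1/((d:ℝ)+1) ≤ Real.exp (1/((d:ℝ)+1)) := by
        have := Real.add_one_le_exp (1/((d:ℝ)+1)); linarith
      calc ((d:ℝ)+2)^(d+1) = ((d:ℝ)+1)^(d+1) * (1 + 1/((d:ℝ)+1))^(d+1) := by
            rw [e, mul_pow]
        _ ≤ ((d:ℝ)+1)^(d+1) * (Real.exp (1/((d:ℝ)+1)))^(d+1) := by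
            apply mul_le_mul_of_nonneg_left _ (by positivity)
            exact pow_le_pow_left₀ (by positivity) h1 _
        _ = ((d:ℝ)+1)^(d+1) * Real.exp ((d+1 : ℕ) * (1/((d:ℝ)+1))) := by
            rw [← Real.exp_nat_mul]
        _ = Real.exp 1 * ((d:ℝ)+1)^(d+1) := by
            rw [show ((d+1 : ℕ) : ℝ) * (1/((d:ℝ)+1)) = 1 by push_cast; field_simp]
            ring
    -- exp 1 ≤ 4 exp(-(3/8))
    have hexp2 : Real.exp 1 ≤ 4 * Real.exp (-(3/8 : ℝ)) := by
      have h128 : Real.exp ((3:ℝ)/128) ≤ 128/125 := by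
        have h := Real.add_one_le_exp (-(3/128 : ℝ))
        have h' : (125/128 : ℝ) ≤ Real.exp (-(3/128:ℝ)) := by norm_num at h ⊢; linarith
        rw [Real.exp_neg] at h'
        have hpos := Real.exp_pos ((3:ℝ)/128)
        have hinv : (Real.exp ((3:ℝ)/128))⁻¹ * Real.exp ((3:ℝ)/128) = 1 :=
          inv_mul_cancel₀ hpos.ne'
        nlinarith [mul_le_mul_of_nonneg_right h' hpos.le]
      have h38 : Real.exp ((3:ℝ)/8) ≤ (128/125 : ℝ)^(16:ℕ) := by
        calc Real.exp ((3:ℝ)/8) = (Real.exp ((3:ℝ)/128))^(16:ℕ) := by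
              rw [← Real.exp_nat_mul]; norm_num
          _ ≤ (128/125 : ℝ)^(16:ℕ) := pow_le_pow_left₀ (Real.exp_pos _).le h128 _
      have hmul : Real.exp 1 * Real.exp ((3:ℝ)/8) ≤ 2.7182818286 * (128/125 : ℝ)^(16:ℕ) := by
        apply mul_le_mul (Real.exp_one_lt_d9).le h38 (Real.exp_pos _).le (by norm_num)
      have hnum : (2.7182818286 : ℝ) * (128/125 : ℝ)^(16:ℕ) ≤ 4 := by norm_num
      calc Real.exp 1 = (Real.exp 1 * Real.exp ((3:ℝ)/8)) * Real.exp (-(3/8:ℝ)) := by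
            rw [mul_assoc, ← Real.exp_add]; norm_num
        _ ≤ 4 * Real.exp (-(3/8:ℝ)) :=
            mul_le_mul_of_nonneg_right (by linarith) (Real.exp_pos _).le
    -- exp(-(3/8)) ≤ (1-κ)^d
    have hexp3 : Real.exp (-(3/8:ℝ)) ≤ (1-κ)^d := by
      have hstep : Real.exp (-(κ/(1-κ))) ≤ 1 - κ := by
        have h := Real.add_one_le_exp (κ/(1-κ))
        have h2 : 1/(1-κ) ≤ Real.exp (κ/(1-κ)) := by
          have e : κ/(1-κ) + 1 = 1/(1-κ) := by field_simp; ring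
          linarith
        rw [Real.exp_neg]
        rw [inv_le_comm₀ (Real.exp_pos _) h1κpos]
        calc (1-κ)⁻¹ = 1/(1-κ) := by rw [one_div]
          _ ≤ Real.exp (κ/(1-κ)) := h2
      calc Real.exp (-(3/8:ℝ)) ≤ Real.exp (-((d:ℝ)*κ/(1-κ))) := by
            apply Real.exp_le_exp.mpr; linarith
        _ = (Real.exp (-(κ/(1-κ))))^d := by
            rw [← Real.exp_nat_mul]; congr 1; ring
        _ ≤ (1-κ)^d := pow_le_pow_left₀ (Real.exp_pos _).le hstep _
    calc ((d:ℝ)+2)^(d+1) ≤ Real.exp 1 * ((d:ℝ)+1)^(d+1) := hexp1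
      _ ≤ (4 * Real.exp (-(3/8:ℝ))) * ((d:ℝ)+1)^(d+1) := by
          apply mul_le_mul_of_nonneg_right hexp2 (by positivity)
      _ ≤ (4 * (1-κ)^d) * ((d:ℝ)+1)^(d+1) := by
          apply mul_le_mul_of_nonneg_right _ (by positivity)
          nlinarith [hexp3]
      _ = 4 * (1-κ)^d * ((d:ℝ)+1)^(d+1) := by ring

/-- Per-vertex inequality. -/
lemma per_vertex (d : ℕ) {a c n : ℝ} (ha : 0 ≤ a) (hc : 0 ≤ c) (hacn : a + c ≤ n) :
    (a * (max 0 (n-2*a-2*c))^d + c * (max 0 (n-2*c))^d) / 2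
      ≤ n^(d+1) * (d:ℝ)^d / ((d:ℝ)+2)^(d+1) := by
  have hn : 0 ≤ n := le_trans (by linarith) hacn
  rcases Nat.eq_zero_or_pos d with h0 | hd
  · subst h0
    simp only [pow_zero, mul_one, pow_one]
    norm_num
    nlinarith
  · have hd1 : 1 ≤ d := hd
    have hdne : d ≠ 0 := Nat.one_le_iff_ne_zero.mp hd
    set κ : ℝ := (d:ℝ)^d/((d:ℝ)+1)^(d+1) with hκdef
    have hden : (0:ℝ) < ((d:ℝ)+1)^(d+1) := by positivity
    have hd2pos : (0:ℝ) < ((d:ℝ)+2)^(d+1) := by positivity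
    have hκ0 : 0 ≤ κ := by positivity
    have hκ1 : κ < 1 := by
      rw [hκdef, div_lt_one hden]
      have h1 : (d:ℝ)^d ≤ ((d:ℝ)+1)^d :=
        pow_le_pow_left₀ (by positivity) (by linarith) d
      have hp : (0:ℝ) < ((d:ℝ)+1)^d := by positivity
      have h2 : ((d:ℝ)+1)^(d+1) = ((d:ℝ)+1)^d * ((d:ℝ)+1) := by ring
      have hd0 : (0:ℝ) < (d:ℝ) := by exact_mod_cast hd
      have h3 : (0:ℝ) < ((d:ℝ)+1)^d * (d:ℝ) := mul_pos hp hd0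
      nlinarith
    have h1κ : (0:ℝ) < 1 - κ := by linarith
    have h1κd : (0:ℝ) < (1-κ)^d := pow_pos h1κ d
    have hκden : κ * ((d:ℝ)+1)^(d+1) = (d:ℝ)^d := by
      rw [hκdef]; field_simp
    rcases le_or_gt (n - 2*c) 0 with hM0 | hMpos
    · have e1 : max 0 (n-2*c) = 0 := max_eq_left hM0
      have e2 : max 0 (n-2*a-2*c) = 0 := max_eq_left (by linarith)
      rw [e1, e2, zero_pow hdne]
      have e3 : (a * 0 + c * 0) / 2 = (0:ℝ) := by ring
      rw [e3]
      positivity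
    · set M : ℝ := n - 2*c with hMdef
      have hMn : M ≤ n := by rw [hMdef]; linarith
      have hM0 : 0 ≤ M := hMpos.le
      have eM : max 0 (n-2*c) = M := max_eq_right hMpos.le
      have T1 : a * (max 0 (n-2*a-2*c))^d ≤ κ * M^(d+1) / 2 := by
        rcases le_or_gt (M - 2*a) 0 with h2a | h2a
        · have e : max 0 (n-2*a-2*c) = 0 := max_eq_left (by rw [hMdef] at h2a; linarith)
          rw [e, zero_pow hdne, mul_zero]
          positivity
        · have e0 : n-2*a-2*c = M - 2*a := by rw [hMdef]; ring
          have e : max 0 (n-2*a-2*c) = M - 2*a := by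
            rw [e0]; exact max_eq_right h2a.le
          rw [e]
          have hpk := amgm_peak d hd1 (u := 2*a) (M := M) (by linarith) (by linarith)
          rw [hκdef, div_mul_eq_mul_div, div_div, le_div_iff₀ (by positivity)]
          calc a * (M-2*a)^d * (((d:ℝ)+1)^(d+1) * 2)
              = (2*a) * (M-(2*a))^d * ((d:ℝ)+1)^(d+1) := by ring
            _ ≤ (d:ℝ)^d * M^(d+1) := hpk
      have hc_eq : c = (n - M)/2 := by rw [hMdef]; ring
      have step1 : (a * (max 0 (n-2*a-2*c))^d + c * (max 0 (n-2*c))^d) / 2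
          ≤ M^d * (n - (1-κ)*M) / 4 := by
        rw [eM]
        have e4 : c * M^d = (n-M)/2 * M^d := by rw [← hc_eq]
        rw [e4]
        have expand : M^d * (n - (1-κ)*M) / 4 = (κ * M^(d+1) / 2) / 2 + ((n-M)/2 * M^d)/2 := by
          have e5 : M^(d+1) = M^d * M := by ring
          rw [e5]; ring
        rw [expand]
        linarith [T1]
      have step2 : M^d * (n - (1-κ)*M) ≤ κ * n^(d+1) / (1-κ)^d := by
        set u : ℝ := (1-κ)*M with hudef
        have hu0 : 0 ≤ u := by positivity
        have hun : u ≤ n := by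
          calc u = (1-κ)*M := rfl
            _ ≤ 1 * M := mul_le_mul_of_nonneg_right (by linarith) hM0
            _ = M := one_mul M
            _ ≤ n := hMn
        have hpk := amgm_peak' d hd1 (u := u) (M := n) hu0 hun
        have eMu : M^d = u^d / (1-κ)^d := by
          rw [hudef, mul_pow]
          field_simp
        rw [eMu, div_mul_eq_mul_div, div_le_div_iff₀ h1κd h1κd]
        apply mul_le_mul_of_nonneg_right _ h1κd.le
        have h7 : u^d*(n-u) * ((d:ℝ)+1)^(d+1) ≤ (κ*n^(d+1)) * ((d:ℝ)+1)^(d+1) := by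
          calc u^d*(n-u) * ((d:ℝ)+1)^(d+1) ≤ (d:ℝ)^d * n^(d+1) := hpk
            _ = (κ*n^(d+1)) * ((d:ℝ)+1)^(d+1) := by rw [← hκden]; ring
        exact le_of_mul_le_mul_right h7 hden
      have step3 : κ * n^(d+1) / (1-κ)^d / 4 ≤ n^(d+1) * (d:ℝ)^d / ((d:ℝ)+2)^(d+1) := by
        rw [div_div, div_le_div_iff₀ (by positivity) hd2pos]
        have hkey := key_ineq d hd1
        rw [← hκdef] at hkey
        have h8 := mul_le_mul_of_nonneg_left hkey
          (mul_nonneg hκ0 (by positivity : (0:ℝ) ≤ n^(d+1)))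
        calc κ*n^(d+1) * ((d:ℝ)+2)^(d+1)
            ≤ κ*n^(d+1) * (4*(1-κ)^d*((d:ℝ)+1)^(d+1)) := h8
          _ = n^(d+1) * (κ*((d:ℝ)+1)^(d+1)) * ((1-κ)^d*4) := by ring
          _ = n^(d+1) * (d:ℝ)^d * ((1-κ)^d*4) := by rw [hκden]
      calc (a * (max 0 (n-2*a-2*c))^d + c * (max 0 (n-2*c))^d) / 2
          ≤ M^d*(n-(1-κ)*M)/4 := step1
        _ ≤ (κ*n^(d+1)/(1-κ)^d)/4 := by linarith [step2]
        _ ≤ n^(d+1) * (d:ℝ)^d / ((d:ℝ)+2)^(d+1) := step3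

lemma convex_pow_two (d : ℕ) : ∀ X Y : ℝ, 0 ≤ X → 0 ≤ Y →
    (X+Y)^d * 2 ≤ 2^d * (X^d + Y^d) := by
  induction d with
  | zero => intro X Y _ _; norm_num
  | succ d ih =>
    intro X Y hX hY
    have h1 := ih X Y hX hY
    have h2 : (X^d - Y^d) * (X - Y) ≥ 0 := by
      rcases le_total X Y with h | h
      · have := pow_le_pow_left₀ hX h d; nlinarith
      · have := pow_le_pow_left₀ hY h d; nlinarith
    have hXY : 0 ≤ X + Y := by linarith
    have h3 : (X+Y)^(d+1) * 2 = (X+Y) * ((X+Y)^d * 2) := by ring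
    have h4 : (X+Y) * ((X+Y)^d * 2) ≤ (X+Y) * (2^d * (X^d + Y^d)) :=
      mul_le_mul_of_nonneg_left h1 hXY
    have eX : X^(d+1) = X*X^d := by ring
    have eY : Y^(d+1) = Y*Y^d := by ring
    have h5 : (X+Y) * (X^d + Y^d) ≤ 2*(X^(d+1) + Y^(d+1)) := by nlinarith [h2, eX, eY]
    have h6 : (0:ℝ) < 2^d := by positivity
    calc (X+Y)^(d+1) * 2 = (X+Y) * ((X+Y)^d * 2) := h3
      _ ≤ (X+Y) * (2^d * (X^d + Y^d)) := h4
      _ = 2^d * ((X+Y) * (X^d + Y^d)) := by ring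
      _ ≤ 2^d * (2*(X^(d+1) + Y^(d+1))) := mul_le_mul_of_nonneg_left h5 h6.le
      _ = 2^(d+1) * (X^(d+1) + Y^(d+1)) := by ring

lemma half_pow (d : ℕ) {W X Y : ℝ} (hW : 0 ≤ W) (hX : 0 ≤ X) (hY : 0 ≤ Y)
    (h : 2*W ≤ X + Y) : W^d ≤ (X^d + Y^d)/2 := by
  have h1 : W ≤ (X+Y)/2 := by linarith
  have h2 : W^d ≤ ((X+Y)/2)^d := pow_le_pow_left₀ hW h1 d
  have h3 : ((X+Y)/2)^d = (X+Y)^d / 2^d := div_pow _ _ _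
  have h4 : (X+Y)^d / 2^d ≤ (X^d + Y^d)/2 := by
    rw [div_le_div_iff₀ (by positivity) (by norm_num)]
    calc (X+Y)^d * 2 ≤ 2^d * (X^d + Y^d) := convex_pow_two d X Y hX hY
      _ = (X^d + Y^d) * 2^d := by ring
  linarith [h2, h3.le, h4]



/- ## Combinatorial lemmas -/

section Paths

variable {n k : ℕ} (A : Fin n → Fin n → Prop)

/-- `p` is an induced-path tuple. -/
def IsPT (m : ℕ) (p : Fin m → Fin n) : Prop :=
  Function.Injective p ∧ ∀ i j : Fin m, A (p i) (p j) ↔ (j:ℕ) = (i:ℕ) + 1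

/-- full path tuples extending the prefix `p`. -/
noncomputable def ExtT (m : ℕ) (hm : m ≤ k) (p : Fin m → Fin n) : Finset (Fin k → Fin n) :=
  univ.filter (fun f => IsPT A k f ∧ ∀ i : Fin m, f (Fin.castLE hm i) = p i)

/-- available vertex set for extensions of the prefix `p`. -/
noncomputable def WS (m : ℕ) (p : Fin m → Fin n) : Finset (Fin n) :=
  univ.filter (fun u =>
    (∀ i : Fin m, ((i:ℕ)+1 < m → ¬ A u (p i) ∧ ¬ A (p i) u) ∧ ((i:ℕ)+1 = m → ¬ A u (p i)))
    ∧ ∀ i : Fin m, u ≠ p i)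

/-- valid next vertices for the prefix `p`. -/
noncomputable def BS (m : ℕ) (p : Fin m → Fin n) : Finset (Fin n) :=
  univ.filter (fun u => IsPT A (m+1) (Fin.snoc p u))

lemma restrict_PT {m : ℕ} (hm : m ≤ k) {f : Fin k → Fin n} (hf : IsPT A k f) :
    IsPT A m (fun i => f (Fin.castLE hm i)) := by
  obtain ⟨hinj, hiff⟩ := hf
  constructor
  · intro i j hij
    have := hinj hij
    exact Fin.castLE_injective hm this
  · intro i j
    simpa using hiff (Fin.castLE hm i) (Fin.castLE hm j)

lemma BS_subset_WS {m : ℕ} (p : Fin m → Fin n) : BS A m p ⊆ WS A m p := by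
  intro u hu
  rw [BS, mem_filter] at hu
  obtain ⟨-, hinj, hiff⟩ := hu
  rw [WS, mem_filter]
  refine ⟨mem_univ _, ⟨?_, ?_⟩⟩
  · intro i
    have h1 : ¬ A u (p i) := by
      have := hiff (Fin.last m) (Fin.castSucc i)
      rw [Fin.snoc_last, Fin.snoc_castSucc] at this
      simp only [Fin.coe_castSucc, Fin.val_last] at this
      intro hA
      have := this.mp hA
      omega
    refine ⟨fun hlt => ⟨h1, ?_⟩, fun _ => h1⟩
    · have := hiff (Fin.castSucc i) (Fin.last m)
      rw [Fin.snoc_last, Fin.snoc_castSucc] at this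
      simp only [Fin.coe_castSucc, Fin.val_last] at this
      intro hA
      have := this.mp hA
      omega
  · intro i hui
    have heq : (Fin.snoc p u : Fin (m+1) → Fin n) (Fin.last m) = (Fin.snoc p u : Fin (m+1) → Fin n) (Fin.castSucc i) := by
      simp only [Fin.snoc_last, Fin.snoc_castSucc]
      exact hui
    have h2 := hinj heq
    have h3 : m = (i : ℕ) := by
      have h4 := congrArg Fin.val h2
      simpa using h4
    omega

lemma WS_snoc_subset {m : ℕ} (hm : 1 ≤ m) (p : Fin m → Fin n) (u : Fin n) :
    WS A (m+1) (Fin.snoc p u) ⊆ WS A m p \ BS A m p := by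
  intro w hw
  rw [WS, mem_filter] at hw
  obtain ⟨-, hcond, hne⟩ := hw
  have hall : ∀ i : Fin m, ¬ A w (p i) ∧ ¬ A (p i) w := by
    intro i
    have h := (hcond (Fin.castSucc i)).1 (by simp only [Fin.coe_castSucc]; omega)
    rwa [Fin.snoc_castSucc] at h
  rw [mem_sdiff]
  constructor
  · rw [WS, mem_filter]
    refine ⟨mem_univ _, ⟨?_, ?_⟩⟩
    · intro i
      exact ⟨fun _ => hall i, fun _ => (hall i).1⟩
    · intro i
      have := hne (Fin.castSucc i)
      rwa [Fin.snoc_castSucc] at this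
  · intro hB
    rw [BS, mem_filter] at hB
    obtain ⟨-, -, hiff⟩ := hB
    have hlast : A (p ⟨m-1, by omega⟩) w := by
      have := hiff (Fin.castSucc ⟨m-1, by omega⟩) (Fin.last m)
      rw [Fin.snoc_last, Fin.snoc_castSucc] at this
      apply this.mpr
      simp only [Fin.val_last, Fin.coe_castSucc]
      omega
    exact (hall ⟨m-1, by omega⟩).2 hlast


lemma castLE_castSucc {m : ℕ} (hm1 : m + 1 ≤ k) (j : Fin m) :
    Fin.castLE hm1 (Fin.castSucc j) = Fin.castLE (by omega : m ≤ k) j := by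
  apply Fin.ext; simp

lemma castLE_last {m : ℕ} (hm1 : m + 1 ≤ k) :
    Fin.castLE hm1 (Fin.last m) = (⟨m, by omega⟩ : Fin k) := by
  apply Fin.ext; simp

lemma ExtT_fiber {m : ℕ} (hm1 : m + 1 ≤ k) (p : Fin m → Fin n) (u : Fin n) :
    (ExtT A m (by omega) p).filter (fun f => f ⟨m, by omega⟩ = u)
      = ExtT A (m+1) hm1 (Fin.snoc p u) := by
  ext f
  simp only [ExtT, mem_filter, mem_univ, true_and]
  constructor
  · rintro ⟨⟨hPT, hpre⟩, hlast⟩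
    refine ⟨hPT, ?_⟩
    intro i
    induction i using Fin.lastCases with
    | last =>
        rw [castLE_last, Fin.snoc_last]
        exact hlast
    | cast j =>
        rw [castLE_castSucc, Fin.snoc_castSucc]
        exact hpre j
  · rintro ⟨hPT, hpre⟩
    refine ⟨⟨hPT, ?_⟩, ?_⟩
    · intro j
      have h := hpre (Fin.castSucc j)
      rwa [castLE_castSucc, Fin.snoc_castSucc] at h
    · have h := hpre (Fin.last m)
      rwa [castLE_last, Fin.snoc_last] at h

lemma ExtT_empty {m : ℕ} (hm1 : m + 1 ≤ k) (p : Fin m → Fin n) (u : Fin n)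
    (hu : u ∉ BS A m p) : ExtT A (m+1) hm1 (Fin.snoc p u) = ∅ := by
  rw [Finset.eq_empty_iff_forall_notMem]
  intro f hf
  simp only [ExtT, mem_filter, mem_univ, true_and] at hf
  obtain ⟨hPT, hpre⟩ := hf
  apply hu
  rw [BS, mem_filter]
  refine ⟨mem_univ _, ?_⟩
  have : (fun i => f (Fin.castLE hm1 i)) = Fin.snoc p u := funext hpre
  rw [← this]
  exact restrict_PT A hm1 hPT

lemma tree_bound : ∀ (r m : ℕ) (hmr : m + r = k) (hm : 1 ≤ m) (hmk : m ≤ k)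
    (p : Fin m → Fin n),
    ((ExtT A m hmk p).card : ℝ) ≤ (((WS A m p).card : ℝ) / r)^r := by
  intro r
  induction r with
  | zero =>
    intro m hmr hm hmk p
    have hmkeq : m = k := by omega
    subst hmkeq
    simp only [pow_zero]
    have hcard : (ExtT A m hmk p).card ≤ 1 := by
      rw [Finset.card_le_one]
      intro f hf g hg
      simp only [ExtT, mem_filter, mem_univ, true_and] at hf hg
      funext i
      have e : Fin.castLE hmk i = i := by apply Fin.ext; simp
      have h1 := hf.2 i
      have h2 := hg.2 i
      rw [e] at h1 h2
      rw [h1, h2]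
    calc ((ExtT A m hmk p).card : ℝ) ≤ 1 := by exact_mod_cast hcard
      _ = (((WS A m p).card : ℝ) / (0:ℕ))^(0:ℕ) := by rw [pow_zero]
      _ = _ := by norm_num
  | succ r ih =>
    intro m hmr hm hmk p
    have hmlt : m < k := by omega
    have hm1 : m + 1 ≤ k := by omega
    have hfib2 : (ExtT A m hmk p).card
        = ∑ u ∈ BS A m p, (ExtT A (m+1) hm1 (Fin.snoc p u)).card := by
      have hfib : (ExtT A m hmk p).card
          = ∑ u ∈ univ, ((ExtT A m hmk p).filter
              (fun f => f (⟨m, hmlt⟩ : Fin k) = u)).card := by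
        apply Finset.card_eq_sum_card_fiberwise
        intro f _
        exact mem_univ _
      rw [hfib]
      rw [← Finset.sum_subset (Finset.subset_univ (BS A m p))]
      · apply Finset.sum_congr rfl
        intro u _
        rw [ExtT_fiber A hm1 p u]
      · intro u _ hu
        rw [ExtT_fiber A hm1 p u, ExtT_empty A hm1 p u hu]
        simp
    have hWB : (BS A m p).card ≤ (WS A m p).card := card_le_card (BS_subset_WS A p)
    set b : ℝ := ((BS A m p).card : ℝ) with hbdef
    set M : ℝ := ((WS A m p).card : ℝ) with hMdef
    have hb0 : 0 ≤ b := by rw [hbdef]; positivity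
    have hbM : b ≤ M := by rw [hbdef, hMdef]; exact_mod_cast hWB
    have hperu : ∀ u ∈ BS A m p,
        ((ExtT A (m+1) hm1 (Fin.snoc p u)).card : ℝ) ≤ ((M - b)/r)^r := by
      intro u _
      have hIH := ih (m+1) (by omega) (by omega) hm1 (Fin.snoc p u)
      refine le_trans hIH ?_
      have hsub : ((WS A (m+1) (Fin.snoc p u)).card : ℝ) ≤ M - b := by
        have h1 : (WS A (m+1) (Fin.snoc p u)).card ≤ (WS A m p \ BS A m p).card :=
          card_le_card (WS_snoc_subset A hm p u)
        have h2 : (WS A m p \ BS A m p).card = (WS A m p).card - (BS A m p).card :=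
          card_sdiff_of_subset (BS_subset_WS A p)
        rw [h2] at h1
        calc ((WS A (m+1) (Fin.snoc p u)).card : ℝ)
            ≤ (((WS A m p).card - (BS A m p).card : ℕ) : ℝ) := by exact_mod_cast h1
          _ = M - b := by rw [Nat.cast_sub hWB, hbdef, hMdef]
      apply pow_le_pow_left₀ (by positivity)
      rw [div_eq_mul_inv, div_eq_mul_inv]
      exact mul_le_mul_of_nonneg_right hsub (by positivity)
    have hsum : ((ExtT A m hmk p).card : ℝ) ≤ b * ((M - b)/r)^r := by
      rw [hfib2]
      push_cast
      calc (∑ u ∈ BS A m p, ((ExtT A (m+1) hm1 (Fin.snoc p u)).card : ℝ))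
          ≤ ∑ u ∈ BS A m p, ((M - b)/r)^r := Finset.sum_le_sum hperu
        _ = b * ((M - b)/r)^r := by
            rw [Finset.sum_const, nsmul_eq_mul]
    refine le_trans hsum ?_
    refine le_trans (amgm_tree r hb0 hbM) ?_
    apply le_of_eq
    congr 1
    push_cast
    ring


noncomputable def outDeg (x : Fin n) : ℕ := (univ.filter (fun y => A x y)).card
noncomputable def inDeg (x : Fin n) : ℕ := (univ.filter (fun y => A y x)).card

lemma IsPT_pair (hA : IsOriented A) {x y : Fin n} (hxy : A x y) :
    IsPT A 2 ![x, y] := by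
  have hxx : ¬ A x x := fun h => hA x x h h
  have hyy : ¬ A y y := fun h => hA y y h h
  have hyx : ¬ A y x := hA x y hxy
  have hne : x ≠ y := by
    intro h; subst h; exact hxx hxy
  constructor
  · intro i j hij
    fin_cases i <;> fin_cases j <;> simp_all
  · intro i j
    fin_cases i <;> fin_cases j <;> simp_all

lemma deg_sum_le (hA : IsOriented A) (v : Fin n) : outDeg A v + inDeg A v ≤ n := by
  have hdisj : Disjoint (univ.filter (fun y => A v y)) (univ.filter (fun y => A y v)) := by
    rw [Finset.disjoint_filter]
    intro u _ h1 h2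
    exact hA v u h1 h2
  calc outDeg A v + inDeg A v
      = ((univ.filter (fun y => A v y)) ∪ (univ.filter (fun y => A y v))).card := by
        rw [card_union_of_disjoint hdisj]; rfl
    _ ≤ (univ : Finset (Fin n)).card := card_le_card (subset_univ _)
    _ = n := by simp

lemma WS_pair_card (hA : IsOriented A) (hT : T3Free A) {x y : Fin n} (hxy : A x y) :
    ((WS A 2 ![x, y]).card : ℝ)
      = (n:ℝ) - ((outDeg A x : ℝ) + (inDeg A x : ℝ) + (inDeg A y : ℝ)) := by
  set U : Finset (Fin n) :=
    ((univ.filter (fun v => A x v)) ∪ (univ.filter (fun v => A v x)))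
      ∪ (univ.filter (fun v => A v y)) with hUdef
  have hWS : WS A 2 ![x, y] = univ \ U := by
    ext u
    simp only [WS, mem_filter, mem_univ, true_and, mem_sdiff, hUdef, mem_union, not_or]
    constructor
    · rintro ⟨hc, hne⟩
      have h0 := hc 0
      have h1 := hc 1
      simp only [Fin.val_zero, Fin.val_one] at h0 h1
      have hx := h0.1 (by norm_num)
      have hy := h1.2 (by norm_num)
      simp only [Matrix.cons_val_zero, Matrix.cons_val_one, Matrix.head_cons] at hx hy
      refine ⟨⟨?_, ?_⟩, ?_⟩ <;> simp_all
    · rintro ⟨⟨hxu, hux⟩, huy⟩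
      have hnex : u ≠ x := by intro h; subst h; exact huy hxy
      have hney : u ≠ y := by intro h; subst h; exact hxu hxy
      constructor
      · intro i
        fin_cases i <;>
          simp only [Fin.val_zero, Fin.val_one, Matrix.cons_val_zero, Matrix.cons_val_one,
            Matrix.head_cons] <;>
          constructor <;> intro h <;> simp_all
      · intro i
        fin_cases i <;> simp_all
  have hUcard : U.card = outDeg A x + inDeg A x + inDeg A y := by
    have hd1 : Disjoint (univ.filter (fun v => A x v)) (univ.filter (fun v => A v x)) := by
      rw [Finset.disjoint_filter]
      intro u _ h1 h2
      exact hA x u h1 h2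
    have hd2 : Disjoint ((univ.filter (fun v => A x v)) ∪ (univ.filter (fun v => A v x)))
        (univ.filter (fun v => A v y)) := by
      rw [Finset.disjoint_left]
      intro u hu hu2
      simp only [mem_union, mem_filter, mem_univ, true_and] at hu hu2
      rcases hu with h | h
      · exact hT x u y ⟨h, hu2, hxy⟩
      · exact hT u x y ⟨h, hxy, hu2⟩
    rw [hUdef, card_union_of_disjoint hd2, card_union_of_disjoint hd1]
    rfl
  rw [hWS, card_sdiff_of_subset (subset_univ _), card_univ, Fintype.card_fin, hUcard]
  have hle : outDeg A x + inDeg A x + inDeg A y ≤ n := by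
    have := card_le_card (subset_univ U)
    rw [hUcard] at this
    simpa using this
  push_cast [Nat.cast_sub hle]
  ring


lemma sum_arcs_fst (g : Fin n → ℝ) :
    ∑ z ∈ (univ : Finset (Fin n × Fin n)).filter (fun z => A z.1 z.2), g z.1
      = ∑ x : Fin n, (outDeg A x : ℝ) * g x := by
  rw [← Finset.univ_product_univ, Finset.sum_filter, Finset.sum_product]
  apply Finset.sum_congr rfl
  intro x _
  dsimp only
  rw [← Finset.sum_filter, Finset.sum_const, nsmul_eq_mul]
  rfl

lemma sum_arcs_snd (g : Fin n → ℝ) :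
    ∑ z ∈ (univ : Finset (Fin n × Fin n)).filter (fun z => A z.1 z.2), g z.2
      = ∑ y : Fin n, (inDeg A y : ℝ) * g y := by
  rw [← Finset.univ_product_univ, Finset.sum_filter, Finset.sum_product]
  rw [Finset.sum_comm]
  apply Finset.sum_congr rfl
  intro y _
  dsimp only
  rw [← Finset.sum_filter, Finset.sum_const, nsmul_eq_mul]
  rfl


/-- numPaths is at most the number of path tuples. -/
lemma numPaths_le_tuples :
    numPaths A k ≤ (univ.filter (fun f : Fin k → Fin n => IsPT A k f)).card := by
  by_cases hne : (univ.filter fun S : Finset (Fin n) => IsInducedPath A k S) = ∅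
  · rw [numPaths, hne]; simp
  · obtain ⟨S₀, hS₀⟩ := Finset.nonempty_iff_ne_empty.mpr hne
    rw [mem_filter] at hS₀
    have hS₀' := hS₀.2
    rw [numPaths]
    apply Finset.card_le_card_of_injOn
      (fun S => if h : IsInducedPath A k S then h.choose else hS₀'.choose)
    · intro S hS
      rw [Finset.mem_coe, mem_filter] at hS
      simp only [dif_pos hS.2]
      rw [Finset.mem_coe, mem_filter]
      obtain ⟨hinj, -, hiff⟩ := hS.2.choose_spec
      exact ⟨mem_univ _, hinj, hiff⟩
    · intro S hS T hT heq
      rw [Finset.mem_coe, mem_filter] at hS hT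
      dsimp only at heq
      rw [dif_pos hS.2, dif_pos hT.2] at heq
      obtain ⟨-, hmemS, -⟩ := hS.2.choose_spec
      obtain ⟨-, hmemT, -⟩ := hT.2.choose_spec
      ext v
      rw [hmemS v, hmemT v, heq]

lemma tuples_le_sum_arcs (hk : 2 ≤ k) :
    ((univ.filter (fun f : Fin k → Fin n => IsPT A k f)).card : ℝ)
      ≤ ∑ z ∈ (univ : Finset (Fin n × Fin n)).filter (fun z => A z.1 z.2),
          ((((WS A 2 ![z.1, z.2]).card : ℝ)) / ((k-2 : ℕ) : ℝ))^(k-2) := by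
  have h0k : 0 < k := by omega
  have h1k : 1 < k := by omega
  set i0 : Fin k := ⟨0, h0k⟩ with hi0
  set i1 : Fin k := ⟨1, h1k⟩ with hi1
  have hfib : (univ.filter (fun f : Fin k → Fin n => IsPT A k f)).card
      = ∑ z ∈ (univ : Finset (Fin n × Fin n)),
          ((univ.filter (fun f : Fin k → Fin n => IsPT A k f)).filter
            (fun f => (f i0, f i1) = z)).card := by
    apply Finset.card_eq_sum_card_fiberwise
    intro f _
    exact mem_univ _
  have hfiber_eq : ∀ z : Fin n × Fin n,
      (univ.filter (fun f : Fin k → Fin n => IsPT A k f)).filter (fun f => (f i0, f i1) = z)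
        = ExtT A 2 hk ![z.1, z.2] := by
    intro z
    ext f
    simp only [ExtT, mem_filter, mem_univ, true_and, Prod.ext_iff]
    constructor
    · rintro ⟨hPT, h0, h1⟩
      refine ⟨hPT, ?_⟩
      intro i
      fin_cases i
      · exact h0
      · exact h1
    · rintro ⟨hPT, hpre⟩
      exact ⟨hPT, hpre 0, hpre 1⟩
  have hempty : ∀ z : Fin n × Fin n, ¬ A z.1 z.2 → ExtT A 2 hk ![z.1, z.2] = ∅ := by
    intro z hz
    rw [Finset.eq_empty_iff_forall_notMem]
    intro f hf
    simp only [ExtT, mem_filter, mem_univ, true_and] at hf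
    obtain ⟨⟨-, hiff⟩, hpre⟩ := hf
    apply hz
    have harc : A (f (Fin.castLE hk 0)) (f (Fin.castLE hk 1)) := by
      apply (hiff _ _).mpr
      simp
    have h0 := hpre 0
    have h1 := hpre 1
    simp only [Matrix.cons_val_zero, Matrix.cons_val_one, Matrix.head_cons] at h0 h1
    rwa [h0, h1] at harc
  have hvanish : ∀ z ∈ (univ : Finset (Fin n × Fin n)),
      z ∉ (univ : Finset (Fin n × Fin n)).filter (fun z => A z.1 z.2) →
      (ExtT A 2 hk ![z.1, z.2]).card = 0 := by
    intro z _ hz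
    rw [mem_filter] at hz
    push_neg at hz
    rw [hempty z (hz (mem_univ z)), card_empty]
  have hsum2 := Finset.sum_subset
    (Finset.filter_subset (fun z : Fin n × Fin n => A z.1 z.2) univ) hvanish
  have hsplit : (univ.filter (fun f : Fin k → Fin n => IsPT A k f)).card
      = ∑ z ∈ (univ : Finset (Fin n × Fin n)).filter (fun z => A z.1 z.2),
          (ExtT A 2 hk ![z.1, z.2]).card := by
    rw [hfib, hsum2]
    apply Finset.sum_congr rfl
    intro z _
    rw [hfiber_eq z]
  rw [hsplit]
  push_cast
  apply Finset.sum_le_sum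
  intro z hz
  exact tree_bound A (k-2) 2 (Nat.add_sub_cancel' hk) one_le_two hk ![z.1, z.2]


/-- the main per-graph bound, in terms of the arc-sum. -/
lemma arc_sum_bound (hA : IsOriented A) (hT : T3Free A) (d : ℕ) :
    ∑ z ∈ (univ : Finset (Fin n × Fin n)).filter (fun z => A z.1 z.2),
        ((((WS A 2 ![z.1, z.2]).card : ℝ)) / (d:ℝ))^d
      ≤ (n:ℝ)^(d+2) / ((d:ℝ)+2)^(d+1) := by
  have hdd : (0:ℝ) < (d:ℝ)^d := by
    rcases Nat.eq_zero_or_pos d with h0 | hpos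
    · subst h0; norm_num
    · exact pow_pos (by exact_mod_cast hpos) d
  set X : Fin n → ℝ := fun v => max 0 ((n:ℝ) - 2*(outDeg A v : ℝ) - 2*(inDeg A v : ℝ)) with hXdef
  set Y : Fin n → ℝ := fun v => max 0 ((n:ℝ) - 2*(inDeg A v : ℝ)) with hYdef
  have hXnn : ∀ v, 0 ≤ X v := fun v => le_max_left _ _
  have hYnn : ∀ v, 0 ≤ Y v := fun v => le_max_left _ _
  -- per-arc bound
  have harc : ∀ z ∈ (univ : Finset (Fin n × Fin n)).filter (fun z => A z.1 z.2),
      ((((WS A 2 ![z.1, z.2]).card : ℝ)) / (d:ℝ))^d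
        ≤ (X z.1)^d / (2*(d:ℝ)^d) + (Y z.2)^d / (2*(d:ℝ)^d) := by
    intro z hz
    rw [mem_filter] at hz
    have hAz := hz.2
    have hWcard := WS_pair_card A hA hT hAz
    set W : ℝ := ((WS A 2 ![z.1, z.2]).card : ℝ) with hWdef
    have hW0 : 0 ≤ W := by rw [hWdef]; positivity
    have h2W : 2*W ≤ X z.1 + Y z.2 := by
      have e1 : (n:ℝ) - 2*(outDeg A z.1 : ℝ) - 2*(inDeg A z.1 : ℝ) ≤ X z.1 := le_max_right _ _
      have e2 : (n:ℝ) - 2*(inDeg A z.2 : ℝ) ≤ Y z.2 := le_max_right _ _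
      linarith [hWcard]
    have hhp := half_pow d hW0 (hXnn z.1) (hYnn z.2) h2W
    calc (W/(d:ℝ))^d = W^d / (d:ℝ)^d := div_pow _ _ _
      _ ≤ ((X z.1)^d + (Y z.2)^d)/2 / (d:ℝ)^d := div_le_div_of_nonneg_right hhp hdd.le
      _ = (X z.1)^d / (2*(d:ℝ)^d) + (Y z.2)^d / (2*(d:ℝ)^d) := by
          rw [div_div, add_div]
  have hsum1 : ∑ z ∈ (univ : Finset (Fin n × Fin n)).filter (fun z => A z.1 z.2),
      ((((WS A 2 ![z.1, z.2]).card : ℝ)) / (d:ℝ))^d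
      ≤ ∑ z ∈ (univ : Finset (Fin n × Fin n)).filter (fun z => A z.1 z.2),
          ((X z.1)^d / (2*(d:ℝ)^d) + (Y z.2)^d / (2*(d:ℝ)^d)) :=
    Finset.sum_le_sum harc
  have hsum2 : ∑ z ∈ (univ : Finset (Fin n × Fin n)).filter (fun z => A z.1 z.2),
      ((X z.1)^d / (2*(d:ℝ)^d) + (Y z.2)^d / (2*(d:ℝ)^d))
      = ∑ v : Fin n, ((outDeg A v : ℝ) * ((X v)^d / (2*(d:ℝ)^d))
          + (inDeg A v : ℝ) * ((Y v)^d / (2*(d:ℝ)^d))) := by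
    rw [Finset.sum_add_distrib, Finset.sum_add_distrib]
    congr 1
    · exact sum_arcs_fst A (fun v => (X v)^d / (2*(d:ℝ)^d))
    · exact sum_arcs_snd A (fun v => (Y v)^d / (2*(d:ℝ)^d))
  have hvert : ∀ v : Fin n, (outDeg A v : ℝ) * ((X v)^d / (2*(d:ℝ)^d))
      + (inDeg A v : ℝ) * ((Y v)^d / (2*(d:ℝ)^d))
      ≤ (n:ℝ)^(d+1) / ((d:ℝ)+2)^(d+1) := by
    intro v
    have hpv := per_vertex d (a := (outDeg A v : ℝ)) (c := (inDeg A v : ℝ)) (n := (n:ℝ))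
      (by positivity) (by positivity) (by exact_mod_cast deg_sum_le A hA v)
    have e : (outDeg A v : ℝ) * ((X v)^d / (2*(d:ℝ)^d))
        + (inDeg A v : ℝ) * ((Y v)^d / (2*(d:ℝ)^d))
        = ((outDeg A v : ℝ) * (X v)^d + (inDeg A v : ℝ) * (Y v)^d) / 2 / (d:ℝ)^d := by
      field_simp
    rw [e]
    rw [hXdef, hYdef]
    have h2 : ((outDeg A v : ℝ) * (max 0 ((n:ℝ) - 2*(outDeg A v:ℝ) - 2*(inDeg A v:ℝ)))^d
        + (inDeg A v : ℝ) * (max 0 ((n:ℝ) - 2*(inDeg A v:ℝ)))^d) / 2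
        ≤ (n:ℝ)^(d+1) * (d:ℝ)^d / ((d:ℝ)+2)^(d+1) := hpv
    calc ((outDeg A v : ℝ) * (max 0 ((n:ℝ) - 2*(outDeg A v:ℝ) - 2*(inDeg A v:ℝ)))^d
        + (inDeg A v : ℝ) * (max 0 ((n:ℝ) - 2*(inDeg A v:ℝ)))^d) / 2 / (d:ℝ)^d
        ≤ ((n:ℝ)^(d+1) * (d:ℝ)^d / ((d:ℝ)+2)^(d+1)) / (d:ℝ)^d :=
          div_le_div_of_nonneg_right h2 hdd.le
      _ = (n:ℝ)^(d+1) / ((d:ℝ)+2)^(d+1) := by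
          field_simp
  have hsum3 : ∑ v : Fin n, ((outDeg A v : ℝ) * ((X v)^d / (2*(d:ℝ)^d))
      + (inDeg A v : ℝ) * ((Y v)^d / (2*(d:ℝ)^d)))
      ≤ ∑ v : Fin n, (n:ℝ)^(d+1) / ((d:ℝ)+2)^(d+1) :=
    Finset.sum_le_sum (fun v _ => hvert v)
  have hsum4 : ∑ v : Fin n, (n:ℝ)^(d+1) / ((d:ℝ)+2)^(d+1)
      = (n:ℝ)^(d+2) / ((d:ℝ)+2)^(d+1) := by
    rw [Finset.sum_const, card_univ, Fintype.card_fin, nsmul_eq_mul, mul_div_assoc']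
    congr 1
    ring
  calc ∑ z ∈ (univ : Finset (Fin n × Fin n)).filter (fun z => A z.1 z.2),
        ((((WS A 2 ![z.1, z.2]).card : ℝ)) / (d:ℝ))^d
      ≤ _ := hsum1
    _ = _ := hsum2
    _ ≤ _ := hsum3
    _ = _ := hsum4



/-- Per-graph bound (part 1). -/
lemma graph_bound (hA : IsOriented A) (hT : T3Free A) (hk : 2 ≤ k) :
    (numPaths A k : ℝ) ≤ (n:ℝ)^k / (k:ℝ)^(k-1) := by
  obtain ⟨d, rfl⟩ : ∃ d, k = d + 2 := ⟨k - 2, by omega⟩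
  have h1 : (numPaths A (d+2) : ℝ)
      ≤ ((univ.filter (fun f : Fin (d+2) → Fin n => IsPT A (d+2) f)).card : ℝ) := by
    exact_mod_cast numPaths_le_tuples A
  have h2 := tuples_le_sum_arcs A hk
  simp only [Nat.add_sub_cancel] at h2
  have h3 := arc_sum_bound A hA hT d
  have e1 : d + 2 - 1 = d + 1 := rfl
  rw [e1]
  have ecast : ((d+2 : ℕ):ℝ) = (d:ℝ)+2 := by push_cast; ring
  calc (numPaths A (d+2) : ℝ)
      ≤ _ := h1
    _ ≤ _ := h2
    _ ≤ (n:ℝ)^(d+2)/((d:ℝ)+2)^(d+1) := h3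
    _ = (n:ℝ)^(d+2)/((d+2:ℕ):ℝ)^(d+1) := by rw [ecast]

end Paths

/- ## Part 2 : limsup -/

section Part2

variable {k : ℕ}

/-- the comparison sequence. -/
noncomputable def gseq (k n : ℕ) : ℝ :=
  (n:ℝ)^k / ((k:ℝ)^(k-1) * (n.choose k : ℝ))

lemma numPaths_empty (n : ℕ) (hk : 2 ≤ k) :
    numPaths (fun _ _ => False : Fin n → Fin n → Prop) k = 0 := by
  rw [numPaths, Finset.card_eq_zero, Finset.eq_empty_iff_forall_notMem]
  intro S hS
  rw [mem_filter] at hS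
  obtain ⟨f, -, -, hiff⟩ := hS.2
  have h := (hiff ⟨0, by omega⟩ ⟨1, by omega⟩).mpr (by simp)
  exact h

lemma zero_mem_density_set (n : ℕ) (hk : 2 ≤ k) :
    (0:ℝ) ∈ {d : ℝ | ∃ A : Fin n → Fin n → Prop, IsOriented A ∧ T3Free A ∧ d = pathDensity A k} := by
  refine ⟨fun _ _ => False, ?_, ?_, ?_⟩
  · intro a b h; exact h.elim
  · intro a b c h; exact h.1.elim
  · rw [pathDensity, numPaths_empty n hk]
    simp

lemma maxDensity_le_g (n : ℕ) (hk : 2 ≤ k)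
    (part1 : ∀ (A : Fin n → Fin n → Prop), IsOriented A → T3Free A →
      (numPaths A k : ℝ) ≤ (n : ℝ) ^ k / (k : ℝ) ^ (k - 1)) :
    maxDensityT3 k n ≤ gseq k n := by
  have hg0 : 0 ≤ gseq k n := by
    rw [gseq]
    positivity
  apply Real.sSup_le _ hg0
  rintro x ⟨A, hA, hT, rfl⟩
  rw [pathDensity]
  have hcard : Fintype.card (Fin n) = n := Fintype.card_fin n
  rw [hcard]
  rcases Nat.eq_zero_or_pos (n.choose k) with h0 | hpos
  · rw [h0]
    simp
    exact hg0
  · have hC : (0:ℝ) < (n.choose k : ℝ) := by exact_mod_cast hpos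
    rw [gseq, ← div_div]
    exact div_le_div_of_nonneg_right (part1 A hA hT) hC.le

lemma maxDensity_nonneg (n : ℕ) (hk : 2 ≤ k)
    (part1 : ∀ (A : Fin n → Fin n → Prop), IsOriented A → T3Free A →
      (numPaths A k : ℝ) ≤ (n : ℝ) ^ k / (k : ℝ) ^ (k - 1)) :
    0 ≤ maxDensityT3 k n := by
  apply le_csSup
  · refine ⟨gseq k n, ?_⟩
    rintro x ⟨A, hA, hT, rfl⟩
    have h := maxDensity_le_g n hk part1
    -- we reprove the individual bound
    rw [pathDensity, Fintype.card_fin]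
    have hg0 : 0 ≤ gseq k n := by rw [gseq]; positivity
    rcases Nat.eq_zero_or_pos (n.choose k) with h0 | hpos
    · rw [h0]
      simp
      exact hg0
    · have hC : (0:ℝ) < (n.choose k : ℝ) := by exact_mod_cast hpos
      rw [gseq, ← div_div]
      exact div_le_div_of_nonneg_right (part1 A hA hT) hC.le
  · exact zero_mem_density_set n hk

lemma tendsto_ratio (i : ℕ) :
    Filter.Tendsto (fun nn : ℕ => (nn:ℝ)/((nn:ℝ)-(i:ℝ))) Filter.atTop (nhds 1) := by
  have h1 : Filter.Tendsto (fun nn : ℕ => ((nn:ℝ)-(i:ℝ))) Filter.atTop Filter.atTop := by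
    apply Filter.tendsto_atTop_add_const_right
    exact tendsto_natCast_atTop_atTop
  have h2 : Filter.Tendsto (fun nn : ℕ => ((nn:ℝ)-(i:ℝ))⁻¹) Filter.atTop (nhds 0) :=
    h1.inv_tendsto_atTop
  have h3 : Filter.Tendsto (fun nn : ℕ => 1 + (i:ℝ)*((nn:ℝ)-(i:ℝ))⁻¹) Filter.atTop (nhds (1 + (i:ℝ)*0)) := by
    apply Filter.Tendsto.add tendsto_const_nhds
    exact Filter.Tendsto.const_mul _ h2
  rw [mul_zero, add_zero] at h3
  apply h3.congr'
  filter_upwards [Filter.eventually_ge_atTop (i+1)] with nn hnn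
  have hne : ((nn:ℝ)-(i:ℝ)) ≠ 0 := by
    have : (i:ℝ) + 1 ≤ (nn:ℝ) := by exact_mod_cast hnn
    linarith
  field_simp
  ring

lemma tendsto_g (hk : 2 ≤ k) :
    Filter.Tendsto (gseq k) Filter.atTop (nhds ((k.factorial : ℝ) / (k:ℝ)^(k-1))) := by
  have hprod : Filter.Tendsto
      (fun nn : ℕ => (k.factorial : ℝ)/(k:ℝ)^(k-1) * ∏ i ∈ Finset.range k, ((nn:ℝ)/((nn:ℝ)-(i:ℝ))))
      Filter.atTop (nhds ((k.factorial : ℝ)/(k:ℝ)^(k-1) * ∏ i ∈ Finset.range k, (1:ℝ))) := by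
    apply Filter.Tendsto.const_mul
    apply tendsto_finset_prod
    intro i _
    exact tendsto_ratio i
  rw [Finset.prod_const_one, mul_one] at hprod
  apply hprod.congr'
  filter_upwards [Filter.eventually_ge_atTop k] with nn hnn
  have hchoosepos : 0 < nn.choose k := Nat.choose_pos hnn
  have hchoose : (0:ℝ) < (nn.choose k : ℝ) := by exact_mod_cast hchoosepos
  have hfact : (0:ℝ) < (k.factorial : ℝ) := by exact_mod_cast k.factorial_pos
  have hk0 : (0:ℝ) < (k:ℝ) := by exact_mod_cast (by omega : 0 < k)
  have hkpos : (0:ℝ) < (k:ℝ)^(k-1) := pow_pos hk0 _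
  have hprodeq : ((nn.descFactorial k : ℕ) : ℝ) = ∏ i ∈ Finset.range k, ((nn:ℝ)-(i:ℝ)) := by
    rw [Nat.descFactorial_eq_prod_range, Nat.cast_prod]
    apply Finset.prod_congr rfl
    intro i hi
    rw [Finset.mem_range] at hi
    have hile : i ≤ nn := by omega
    push_cast [Nat.cast_sub hile]
    ring
  have hdesc : ((nn.descFactorial k : ℕ):ℝ) = (k.factorial : ℝ) * (nn.choose k : ℝ) := by
    exact_mod_cast Nat.descFactorial_eq_factorial_mul_choose nn k
  have hprodpos : (0:ℝ) < ∏ i ∈ Finset.range k, ((nn:ℝ)-(i:ℝ)) := by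
    rw [← hprodeq]
    have : 0 < nn.descFactorial k := by
      rw [Nat.descFactorial_eq_factorial_mul_choose]
      positivity
    exact_mod_cast this
  rw [gseq, Finset.prod_div_distrib, Finset.prod_const, Finset.card_range, ← hprodeq, hdesc]
  field_simp



lemma part2_final (hk : 2 ≤ k)
    (part1 : ∀ (n : ℕ) (A : Fin n → Fin n → Prop), IsOriented A → T3Free A →
      (numPaths A k : ℝ) ≤ (n : ℝ) ^ k / (k : ℝ) ^ (k - 1)) :
    Filter.atTop.limsup (fun n : ℕ => maxDensityT3 k n) ≤
      (Nat.factorial k : ℝ) / (k : ℝ) ^ (k - 1) := by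
  have hg := tendsto_g hk
  have hle : (fun n => maxDensityT3 k n) ≤ᶠ[Filter.atTop] gseq k :=
    Filter.Eventually.of_forall (fun n => maxDensity_le_g n hk (part1 n))
  have hcob : Filter.atTop.IsCoboundedUnder (· ≤ ·) (fun n => maxDensityT3 k n) :=
    Filter.isCoboundedUnder_le_of_eventually_le Filter.atTop
      (Filter.Eventually.of_forall (fun n => maxDensity_nonneg n hk (part1 n)))
  have hbd : Filter.atTop.IsBoundedUnder (· ≤ ·) (gseq k) := hg.isBoundedUnder_le
  calc Filter.atTop.limsup (fun n : ℕ => maxDensityT3 k n)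
      ≤ Filter.atTop.limsup (gseq k) := Filter.limsup_le_limsup hle hcob hbd
    _ = _ := hg.limsup_eq

end Part2

end Stmt12Aux

/-- Every `T⃗₃`-free oriented graph on `n` vertices has at most
`n^k/k^{k−1}` induced copies of `P⃗ₖ`; consequently `I(P⃗ₖ, T⃗) ≤ k!/k^{k−1}`. -/
theorem inducibility_Pk_T3free_upper (k : ℕ) (hk : 2 ≤ k) :
    (∀ (n : ℕ) (A : Fin n → Fin n → Prop), IsOriented A → T3Free A →
      (numPaths A k : ℝ) ≤ (n : ℝ) ^ k / (k : ℝ) ^ (k - 1)) ∧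
    Filter.atTop.limsup (fun n : ℕ => maxDensityT3 k n) ≤
      (Nat.factorial k : ℝ) / (k : ℝ) ^ (k - 1) := by
  have part1 : ∀ (n : ℕ) (A : Fin n → Fin n → Prop), IsOriented A → T3Free A →
      (numPaths A k : ℝ) ≤ (n : ℝ) ^ k / (k : ℝ) ^ (k - 1) :=
    fun n A hA hT => Stmt12Aux.graph_bound A hA hT hk
  exact ⟨part1, Stmt12Aux.part2_final hk part1⟩
end

section
/- For every integer k ≥ 2 and every positive integer n divisible by k+1, the balanced blow-up of the directed (k+1)-cycle C⃗_{k+1} on n vertices (all k+1 parts of size n/(k+1)) is a T⃗₃-free oriented graph containing exactly (k+1)·(n/(k+1))^k induced copies of P⃗_k. Consequently, I(P⃗_k, T⃗) ≥ k! / (k+1)^{k−1}. -/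
open scoped Classical

section Aux

open scoped Classical
open Fin.NatCast

lemma fin_cast_inj {k : ℕ} {a b : ℕ} (ha : a < k+1) (hb : b < k+1)
    (h : (a : Fin (k+1)) = (b : Fin (k+1))) : a = b := by
  have := congrArg Fin.val h
  rwa [Fin.val_cast_of_lt ha, Fin.val_cast_of_lt hb] at this

lemma e_inj {k : ℕ} (c : Fin (k+1)) :
    Function.Injective (fun i : Fin k => c + ((i : ℕ) : Fin (k+1))) := by
  intro i j h
  simp only [add_right_inj] at h
  exact Fin.ext (fin_cast_inj (lt_trans i.2 (Nat.lt_succ_self k))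
    (lt_trans j.2 (Nat.lt_succ_self k)) h)

lemma step_iff {k : ℕ} (c : Fin (k+1)) (i j : Fin k) :
    (c + ((j:ℕ) : Fin (k+1)) = c + ((i:ℕ) : Fin (k+1)) + 1) ↔ (j:ℕ) = (i:ℕ) + 1 := by
  rw [add_assoc, add_right_inj]
  constructor
  · intro h
    have h' : ((j:ℕ) : Fin (k+1)) = (((i:ℕ) + 1 : ℕ) : Fin (k+1)) := by
      rw [Nat.cast_add, Nat.cast_one]; exact h
    exact fin_cast_inj (lt_trans j.2 (Nat.lt_succ_self k)) (Nat.succ_lt_succ i.2) h'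
  · intro h
    rw [show ((j:ℕ) : Fin (k+1)) = (((i:ℕ)+1 : ℕ) : Fin (k+1)) from congrArg _ h,
      Nat.cast_add, Nat.cast_one]

lemma blowup_oriented_t3free {V : Type*} {k : ℕ} (hk : 2 ≤ k)
    (g : V → Fin (k+1)) (A : V → V → Prop)
    (hA : ∀ u v, A u v ↔ g v = g u + 1) : IsOriented A ∧ T3Free A := by
  have hone : ∀ x : Fin (k+1), x + 1 ≠ x := by
    intro x h
    have h1 : (1 : Fin (k+1)) = 0 := by
      have := add_eq_left.mp h
      exact this
    have h2 : ((1:ℕ) : Fin (k+1)) = ((0:ℕ) : Fin (k+1)) := by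
      rw [Nat.cast_one, Nat.cast_zero, h1]
    exact absurd (fin_cast_inj (by omega) (by omega) h2) (by omega)
  constructor
  · intro a b hab hba
    rw [hA] at hab hba
    rw [hab] at hba
    -- hba : g a = g a + 1 + 1
    have h0 : (1 + 1 : Fin (k+1)) = 0 := by
      rw [add_assoc] at hba
      exact (left_eq_add.mp hba)
    have h2 : ((2:ℕ) : Fin (k+1)) = ((0:ℕ) : Fin (k+1)) := by
      show (((1+1 : ℕ)) : Fin (k+1)) = _
      rw [Nat.cast_add, Nat.cast_one, Nat.cast_zero, h0]
    exact absurd (fin_cast_inj (by omega) (by omega) h2) (by omega)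
  · rintro a b c ⟨h1, h2, h3⟩
    rw [hA] at h1 h2 h3
    rw [h1] at h2
    rw [h3] at h2
    -- h2 : g a + 1 = g a + 1 + 1
    exact hone _ h2.symm

lemma blowup_numPaths {V : Type*} [Fintype V] [DecidableEq V] (k : ℕ) (hk : 0 < k)
    (g : V → Fin (k+1)) (A : V → V → Prop)
    (hA : ∀ u v, A u v ↔ g v = g u + 1) :
    numPaths A k = ∑ c : Fin (k+1), ∏ i : Fin k, partSize g (c + ((i:ℕ) : Fin (k+1))) := by
  classical
  have key : (Finset.univ.filter (fun p : Fin (k+1) × (Fin k → V) =>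
          ∀ i : Fin k, g (p.2 i) = p.1 + ((i:ℕ) : Fin (k+1)))).card
      = (Finset.univ.filter fun S : Finset V => IsInducedPath A k S).card := by
    apply Finset.card_bij (fun p _ => Finset.image p.2 Finset.univ)
    · rintro p hp
      simp only [Finset.mem_filter, Finset.mem_univ, true_and] at hp ⊢
      have hinj : Function.Injective p.2 := by
        intro i j h
        apply e_inj p.1
        show p.1 + _ = p.1 + _
        rw [← hp i, ← hp j, h]
      refine ⟨p.2, hinj, ?_, ?_⟩
      · intro v; simp [Finset.mem_image]
      · intro i j
        rw [hA, hp i, hp j, step_iff]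
    · rintro p hp q hq h
      simp only [Finset.mem_filter, Finset.mem_univ, true_and] at hp hq
      have hparts : Finset.image (fun i : Fin k => p.1 + ((i:ℕ) : Fin (k+1))) Finset.univ
          = Finset.image (fun i : Fin k => q.1 + ((i:ℕ) : Fin (k+1))) Finset.univ := by
        have h1 : Finset.image g (Finset.image p.2 Finset.univ)
            = Finset.image (fun i : Fin k => p.1 + ((i:ℕ) : Fin (k+1))) Finset.univ := by
          rw [Finset.image_image]
          apply Finset.image_congr
          intro i _
          exact hp i
        have h2 : Finset.image g (Finset.image q.2 Finset.univ)
            = Finset.image (fun i : Fin k => q.1 + ((i:ℕ) : Fin (k+1))) Finset.univ := by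
          rw [Finset.image_image]
          apply Finset.image_congr
          intro i _
          exact hq i
        rw [← h1, ← h2, h]
      have hmiss : ∀ c : Fin (k+1),
          Finset.univ \ Finset.image (fun i : Fin k => c + ((i:ℕ) : Fin (k+1))) Finset.univ
            = {c + ((k:ℕ) : Fin (k+1))} := by
        intro c
        symm
        apply Finset.eq_of_subset_of_card_le
        · rw [Finset.singleton_subset_iff]
          simp only [Finset.mem_sdiff, Finset.mem_univ, true_and, Finset.mem_image]
          rintro ⟨i, hi⟩
          have : (i : ℕ) = k := fin_cast_inj (lt_trans i.2 (Nat.lt_succ_self k))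
            (Nat.lt_succ_self k) (add_left_cancel hi)
          exact absurd this (Nat.ne_of_lt i.2)
        · rw [Finset.card_sdiff_of_subset (Finset.subset_univ _),
            Finset.card_image_of_injective _ (e_inj c)]
          simp
      have hc : p.1 = q.1 := by
        have h2 : p.1 + ((k:ℕ) : Fin (k+1)) = q.1 + ((k:ℕ) : Fin (k+1)) := by
          have h3 : ({p.1 + ((k:ℕ) : Fin (k+1))} : Finset (Fin (k+1)))
              = {q.1 + ((k:ℕ) : Fin (k+1))} := by
            rw [← hmiss p.1, ← hmiss q.1, hparts]
          simpa using h3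
        exact add_right_cancel h2
      have hf : p.2 = q.2 := by
        funext i
        have hmem : p.2 i ∈ Finset.image q.2 Finset.univ := by
          rw [← h]; exact Finset.mem_image_of_mem _ (Finset.mem_univ i)
        obtain ⟨j, -, hj⟩ := Finset.mem_image.mp hmem
        have : q.1 + ((j:ℕ) : Fin (k+1)) = q.1 + ((i:ℕ) : Fin (k+1)) := by
          rw [← hq j, hj, hp i, hc]
        have hij : j = i := e_inj q.1 this
        rw [← hj, hij]
      exact Prod.ext hc hf
    · rintro S hS
      simp only [Finset.mem_filter, Finset.mem_univ, true_and] at hS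
      obtain ⟨f, hinj, hmem, harc⟩ := hS
      set z : Fin k := ⟨0, hk⟩
      have hstep : ∀ m (hm : m < k), g (f ⟨m, hm⟩) = g (f z) + ((m:ℕ) : Fin (k+1)) := by
        intro m
        induction m with
        | zero => intro hm; simp [z]
        | succ m ih =>
          intro hm
          have hm' : m < k := lt_trans (Nat.lt_succ_self m) hm
          have harc' : A (f ⟨m, hm'⟩) (f ⟨m+1, hm⟩) := by
            rw [harc]
          rw [hA] at harc'
          rw [harc', ih hm', Nat.cast_add, Nat.cast_one, add_assoc]
      refine ⟨(g (f z), f), ?_, ?_⟩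
      · simp only [Finset.mem_filter, Finset.mem_univ, true_and]
        intro i
        have := hstep i.1 i.2
        simpa using this
      · ext v
        simp only [Finset.mem_image, Finset.mem_univ, true_and]
        rw [hmem v]
  rw [numPaths, ← key, ← Fintype.card_subtype]
  have e : {p : Fin (k+1) × (Fin k → V) // ∀ i : Fin k, g (p.2 i) = p.1 + ((i:ℕ) : Fin (k+1))}
      ≃ Σ c : Fin (k+1), ∀ i : Fin k, {v : V // g v = c + ((i:ℕ) : Fin (k+1))} :=
    { toFun := fun p => ⟨p.1.1, fun i => ⟨p.1.2 i, p.2 i⟩⟩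
      invFun := fun q => ⟨⟨q.1, fun i => (q.2 i).1⟩, fun i => (q.2 i).2⟩
      left_inv := fun p => rfl
      right_inv := fun q => rfl }
  rw [Fintype.card_congr e, Fintype.card_sigma]
  apply Finset.sum_congr rfl
  intro c _
  rw [Fintype.card_pi]
  apply Finset.prod_congr rfl
  intro i _
  rw [Fintype.card_subtype]
  rfl

lemma part_lb (k n : ℕ) (i : Fin (k+1)) :
    n / (k+1) ≤ partSize (fun v : Fin n => ((v:ℕ) : Fin (k+1))) i := by
  classical
  set m := n / (k+1) with hm
  have hbound : ∀ j : Fin m, i.1 + (k+1) * j.1 < n := by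
    intro j
    have h1 : (k+1) * j.1 + (k+1) ≤ (k+1) * m := by
      rw [← Nat.mul_succ]
      exact Nat.mul_le_mul_left _ j.2
    have h2 : (k+1) * m ≤ n := by
      rw [hm, Nat.mul_comm]
      exact Nat.div_mul_le_self n (k+1)
    have h3 : i.1 < k + 1 := i.2
    linarith
  have hval : ∀ j : Fin m,
      (((i.1 + (k+1) * j.1 : ℕ)) : Fin (k+1)) = i := by
    intro j
    rw [Fin.ext_iff, Fin.val_natCast, Nat.add_mul_mod_self_left, Nat.mod_eq_of_lt i.2]
  calc m = (Finset.univ : Finset (Fin m)).card := by simp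
    _ ≤ _ := by
        apply Finset.card_le_card_of_injOn (fun j : Fin m => (⟨i.1 + (k+1)*j.1, hbound j⟩ : Fin n))
        · intro j _
          simp only [Finset.mem_filter, Finset.mem_univ, true_and]
          exact Finset.mem_coe.mpr (Finset.mem_filter.mpr ⟨Finset.mem_univ _, hval j⟩)
        · intro j _ j' _ h
          have := congrArg Fin.val h
          simp only at this
          have : j.1 = j'.1 := by
            have := Nat.add_left_cancel this
            exact Nat.eq_of_mul_eq_mul_left (Nat.succ_pos k) this
          exact Fin.ext this

lemma numPaths_le_choose {V : Type*} [Fintype V] [DecidableEq V]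
    (A : V → V → Prop) (k : ℕ) : numPaths A k ≤ (Fintype.card V).choose k := by
  classical
  rw [numPaths]
  have hcard : ((Finset.univ : Finset V).powersetCard k).card = (Fintype.card V).choose k := by
    rw [Finset.card_powersetCard, Finset.card_univ]
  rw [← hcard]
  · apply Finset.card_le_card
    intro S hS
    simp only [Finset.mem_filter, Finset.mem_univ, true_and] at hS
    obtain ⟨f, hinj, hmem, -⟩ := hS
    rw [Finset.mem_powersetCard]
    constructor
    · exact Finset.subset_univ S
    · have : S = Finset.image f Finset.univ := by
        ext v
        rw [hmem v]
        simp [Finset.mem_image]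
      rw [this, Finset.card_image_of_injective _ hinj, Finset.card_univ, Fintype.card_fin]

lemma pathDensity_nonneg {V : Type*} [Fintype V] [DecidableEq V]
    (A : V → V → Prop) (k : ℕ) : 0 ≤ pathDensity A k := by
  unfold pathDensity; positivity

lemma pathDensity_le_one {V : Type*} [Fintype V] [DecidableEq V]
    (A : V → V → Prop) (k : ℕ) : pathDensity A k ≤ 1 := by
  unfold pathDensity
  rcases Nat.eq_zero_or_pos ((Fintype.card V).choose k) with h | h
  · rw [h]; simp
  · rw [div_le_one (by positivity)]
    exact_mod_cast numPaths_le_choose A k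

lemma maxDensityT3_nonneg (k n : ℕ) : 0 ≤ maxDensityT3 k n := by
  have hmem : pathDensity (fun _ _ : Fin n => False) k ∈
      {d : ℝ | ∃ A : Fin n → Fin n → Prop, IsOriented A ∧ T3Free A ∧ d = pathDensity A k} :=
    ⟨_, fun _ _ h => h.elim, fun _ _ _ h => h.1.elim, rfl⟩
  have hbdd : BddAbove {d : ℝ | ∃ A : Fin n → Fin n → Prop,
      IsOriented A ∧ T3Free A ∧ d = pathDensity A k} := by
    refine ⟨1, ?_⟩
    rintro d ⟨A, -, -, rfl⟩
    exact pathDensity_le_one A k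
  exact le_trans (pathDensity_nonneg _ k) (le_csSup hbdd hmem)

lemma maxDensityT3_le_one (k n : ℕ) : maxDensityT3 k n ≤ 1 := by
  apply csSup_le
  · exact ⟨_, ⟨fun _ _ : Fin n => False, fun _ _ h => h.elim, fun _ _ _ h => h.1.elim, rfl⟩⟩
  · rintro d ⟨A, -, -, rfl⟩
    exact pathDensity_le_one A k

lemma le_maxDensityT3 {k n : ℕ} {A : Fin n → Fin n → Prop}
    (h1 : IsOriented A) (h2 : T3Free A) : pathDensity A k ≤ maxDensityT3 k n := by
  have hbdd : BddAbove {d : ℝ | ∃ A : Fin n → Fin n → Prop,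
      IsOriented A ∧ T3Free A ∧ d = pathDensity A k} := by
    refine ⟨1, ?_⟩
    rintro d ⟨A, -, -, rfl⟩
    exact pathDensity_le_one A k
  exact le_csSup hbdd ⟨A, h1, h2, rfl⟩

end Aux

/-- For `k ≥ 2` and `n = (k+1)m` with `m > 0`, the balanced blow-up of
the directed `(k+1)`-cycle on `n` vertices (every part of size `m`) is a `T⃗₃`-free
oriented graph with exactly `(k+1)·m^k` induced copies of `P⃗ₖ`. Consequently
`I(P⃗ₖ, T⃗) ≥ k!/(k+1)^{k−1}`. -/
theorem inducibility_Pk_T3free_lower (k : ℕ) (hk : 2 ≤ k) :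
    (∀ (m : ℕ), 0 < m →
      ∀ (A : Fin ((k + 1) * m) → Fin ((k + 1) * m) → Prop)
        (g : Fin ((k + 1) * m) → Fin (k + 1)),
        (∀ u v, A u v ↔ g v = g u + 1) →
        (∀ i : Fin (k + 1), partSize g i = m) →
        IsOriented A ∧ T3Free A ∧ numPaths A k = (k + 1) * m ^ k) ∧
    (Nat.factorial k : ℝ) / ((k : ℝ) + 1) ^ (k - 1) ≤
      Filter.atTop.liminf (fun n : ℕ => maxDensityT3 k n) := by
  constructor
  · intro m hm A g hA hsize
    obtain ⟨ho, ht⟩ := blowup_oriented_t3free hk g A hA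
    refine ⟨ho, ht, ?_⟩
    rw [blowup_numPaths k (by omega) g A hA]
    open Fin.NatCast in
    have hprod : ∀ c : Fin (k+1),
        ∏ i : Fin k, partSize g (c + ((i:ℕ) : Fin (k+1))) = m ^ k := by
      intro c
      rw [Finset.prod_congr rfl (fun i _ => hsize _), Finset.prod_const,
        Finset.card_univ, Fintype.card_fin]
    rw [Finset.sum_congr rfl (fun c _ => hprod c), Finset.sum_const,
      Finset.card_univ, Fintype.card_fin, smul_eq_mul]
  · set L : ℝ := (Nat.factorial k : ℝ) / ((k : ℝ) + 1) ^ (k - 1) with hL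
    have hLpos : 0 < L := by positivity
    -- the comparison sequence
    set b : ℕ → ℝ := fun n => L * (1 - (k:ℝ)/n)^k with hb
    have hlim : Filter.Tendsto b Filter.atTop (nhds L) := by
      have h0 : Filter.Tendsto (fun n : ℕ => (k:ℝ) / n) Filter.atTop (nhds 0) :=
        tendsto_const_div_atTop_nhds_zero_nat (k:ℝ)
      have h1 : Filter.Tendsto (fun n : ℕ => 1 - (k:ℝ)/n) Filter.atTop (nhds 1) := by
        simpa using (tendsto_const_nhds (x := (1:ℝ))).sub h0
      have h2 := h1.pow k
      rw [one_pow] at h2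
      simpa using (tendsto_const_nhds (x := L)).mul h2
    have hev : ∀ᶠ n in Filter.atTop, b n ≤ maxDensityT3 k n := by
      rw [Filter.eventually_atTop]
      refine ⟨k + 1, ?_⟩
      intro n hn
      set m := n / (k+1) with hmdef
      open Fin.NatCast in
      set g : Fin n → Fin (k+1) := fun v => ((v:ℕ) : Fin (k+1)) with hg
      set A : Fin n → Fin n → Prop := fun u v => g v = g u + 1 with hAdef
      have hA : ∀ u v, A u v ↔ g v = g u + 1 := fun u v => Iff.rfl
      obtain ⟨ho, ht⟩ := blowup_oriented_t3free hk g A hA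
      -- count lower bound
      have hcount : (k+1) * m ^ k ≤ numPaths A k := by
        rw [blowup_numPaths k (by omega) g A hA]
        calc (k+1) * m ^ k = ∑ _c : Fin (k+1), m ^ k := by
              rw [Finset.sum_const, Finset.card_univ, Fintype.card_fin, smul_eq_mul]
          _ ≤ _ := by
              apply Finset.sum_le_sum
              intro c _
              calc m ^ k = ∏ _i : Fin k, m := by
                    rw [Finset.prod_const, Finset.card_univ, Fintype.card_fin]
                _ ≤ _ := Finset.prod_le_prod' fun i _ => part_lb k n _
      -- numeric facts
      have hkn : k ≤ n := by omega
      have hnpos : (0:ℝ) < n := by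
        have : 0 < n := by omega
        exact_mod_cast this
      have hchoosepos : (0:ℝ) < (n.choose k : ℝ) := by
        exact_mod_cast Nat.choose_pos hkn
      have hFpos : (0:ℝ) < (Nat.factorial k : ℝ) := by exact_mod_cast Nat.factorial_pos k
      have hK1pos : (0:ℝ) < ((k:ℝ)+1)^(k-1) := by positivity
      have hx0 : (0:ℝ) ≤ (n:ℝ) - k := by
        rw [sub_nonneg]; exact_mod_cast hkn
      have hone : (1 : ℝ) - (k:ℝ)/n = ((n:ℝ) - k)/n := by
        field_simp
      -- the analytic inequality : b n ≤ ((k+1) * m^k) / choose n k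
      have hanal : b n ≤ (((k+1) * m ^ k : ℕ) : ℝ) / (n.choose k : ℝ) := by
        rw [le_div_iff₀ hchoosepos, hb]
        simp only
        rw [hone, div_pow]
        have hc' : (n.choose k : ℝ) * (Nat.factorial k : ℝ) ≤ (n:ℝ)^k := by
          have h := Nat.descFactorial_le_pow n k
          rw [Nat.descFactorial_eq_factorial_mul_choose] at h
          calc (n.choose k : ℝ) * (Nat.factorial k : ℝ)
              = ((Nat.factorial k * n.choose k : ℕ) : ℝ) := by push_cast; ring
            _ ≤ ((n ^ k : ℕ) : ℝ) := by exact_mod_cast h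
            _ = (n:ℝ)^k := by push_cast; rfl
        have hxk : ((n:ℝ) - k)^k ≤ ((k:ℝ)+1)^k * (m:ℝ)^k := by
          have hnat : n ≤ (k+1) * m + k := by
            have h1 := Nat.div_add_mod n (k+1)
            rw [← hmdef] at h1
            have h2 : n % (k+1) < k+1 := Nat.mod_lt _ (by omega)
            omega
          have hxle : (n:ℝ) - k ≤ ((k:ℝ)+1) * m := by
            have : (n:ℝ) ≤ ((k:ℝ)+1) * m + k := by exact_mod_cast hnat
            linarith
          calc ((n:ℝ) - k)^k ≤ (((k:ℝ)+1) * m)^k := pow_le_pow_left₀ hx0 hxle k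
            _ = ((k:ℝ)+1)^k * (m:ℝ)^k := mul_pow _ _ _
        have hKk : ((k:ℝ)+1)^k = ((k:ℝ)+1)^(k-1) * ((k:ℝ)+1) := by
          have h := pow_succ ((k:ℝ)+1) (k-1)
          rw [show k-1+1 = k by omega] at h
          exact h
        have step1 : L * (((n:ℝ) - k)^k / (n:ℝ)^k) * (n.choose k : ℝ)
            ≤ L * (((n:ℝ) - k)^k / (n:ℝ)^k) * ((n:ℝ)^k / (Nat.factorial k : ℝ)) := by
          apply mul_le_mul_of_nonneg_left _ (by positivity)
          rw [le_div_iff₀ hFpos]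
          exact hc'
        have step2 : L * (((n:ℝ) - k)^k / (n:ℝ)^k) * ((n:ℝ)^k / (Nat.factorial k : ℝ))
            = ((n:ℝ) - k)^k / ((k:ℝ)+1)^(k-1) := by
          rw [hL]
          field_simp
        have step3 : ((n:ℝ) - k)^k / ((k:ℝ)+1)^(k-1) ≤ (((k+1) * m ^ k : ℕ) : ℝ) := by
          rw [div_le_iff₀ hK1pos]
          push_cast
          calc ((n:ℝ) - k)^k ≤ ((k:ℝ)+1)^k * (m:ℝ)^k := hxk
            _ = ((k:ℝ)+1) * (m:ℝ)^k * ((k:ℝ)+1)^(k-1) := by rw [hKk]; ring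
        calc L * (((n:ℝ) - k)^k / (n:ℝ)^k) * (n.choose k : ℝ)
            ≤ ((n:ℝ) - k)^k / ((k:ℝ)+1)^(k-1) := by rw [← step2]; exact step1
          _ ≤ (((k+1) * m ^ k : ℕ) : ℝ) := step3
      -- density lower bound
      have hdens : (((k+1) * m ^ k : ℕ) : ℝ) / (n.choose k : ℝ) ≤ pathDensity A k := by
        unfold pathDensity
        rw [Fintype.card_fin]
        gcongr
      exact le_trans hanal (le_trans hdens (le_maxDensityT3 ho ht))
    -- conclude via liminf
    have hbdd : Filter.IsBoundedUnder (· ≥ ·) Filter.atTop b := hlim.isBoundedUnder_ge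
    have hcob : Filter.IsCoboundedUnder (· ≥ ·) Filter.atTop (fun n : ℕ => maxDensityT3 k n) := by
      apply Filter.IsBoundedUnder.isCoboundedUnder_ge
      exact Filter.isBoundedUnder_of ⟨1, fun n => maxDensityT3_le_one k n⟩
    calc L = Filter.liminf b Filter.atTop := hlim.liminf_eq.symm
      _ ≤ Filter.atTop.liminf (fun n : ℕ => maxDensityT3 k n) :=
          Filter.liminf_le_liminf hev hbdd hcob
end

section
/- Let G be an oriented graph and let j be a positive integer. Let B be the uniform j-fold blow-up of G, i.e., each vertex v of G is replaced by an independent set X_v of size j, with all arcs from X_u to X_v whenever u→v is an arc of G and no other arcs. Then the number of induced copies of P⃗₄ in B equals j⁴ times the number of induced copies of P⃗₄ in G. Moreover, if G is T⃗₃-free then B is T⃗₃-free. -/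
open scoped Classical

lemma path_inj {α : Type*} (h : α → α → Prop) (f : Fin 4 → α)
    (hf : ∀ a b : Fin 4, h (f a) (f b) ↔ (b : ℕ) = (a : ℕ) + 1) :
    Function.Injective f := by
  have key : ∀ a b : Fin 4, f a = f b → (a : ℕ) < 3 → a = b := by
    intro a b he ha
    have h1 : h (f a) (f ⟨(a : ℕ) + 1, by omega⟩) := (hf _ _).mpr (by simp)
    rw [he] at h1
    have h2 := (hf _ _).mp h1
    simp at h2
    exact Fin.ext (by omega)
  intro a b he
  rcases lt_or_ge (a : ℕ) 3 with ha | ha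
  · exact key a b he ha
  rcases lt_or_ge (b : ℕ) 3 with hb | hb
  · exact (key b a he.symm hb).symm
  · exact Fin.ext (by omega)

set_option maxRecDepth 4000 in
lemma tau_id : ∀ τ : Fin 4 → Fin 4,
    (∀ a b : Fin 4, (b : ℕ) = (a : ℕ) + 1 → (τ b : ℕ) = (τ a : ℕ) + 1) → τ = id := by
  decide

lemma witness_unique {α : Type*} (h : α → α → Prop) (f g : Fin 4 → α)
    (hf : ∀ a b : Fin 4, h (f a) (f b) ↔ (b : ℕ) = (a : ℕ) + 1)
    (hg : ∀ a b : Fin 4, h (g a) (g b) ↔ (b : ℕ) = (a : ℕ) + 1)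
    (him : ∀ v, (∃ i, f i = v) ↔ (∃ i, g i = v)) : f = g := by
  have hex : ∀ i : Fin 4, ∃ k, f k = g i := fun i => (him (g i)).mpr ⟨i, rfl⟩
  set τ : Fin 4 → Fin 4 := fun i => (hex i).choose with hτdef
  have hτ : ∀ i, f (τ i) = g i := fun i => (hex i).choose_spec
  have harc : ∀ a b : Fin 4, (b : ℕ) = (a : ℕ) + 1 → (τ b : ℕ) = (τ a : ℕ) + 1 := by
    intro a b hab
    have : h (g a) (g b) := (hg a b).mpr hab
    rw [← hτ a, ← hτ b] at this
    exact (hf _ _).mp this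
  have := tau_id τ harc
  funext i
  have := congrFun this i
  rw [← hτ i, this]; rfl

lemma numPaths_four {V : Type*} [Fintype V] [DecidableEq V] (A : V → V → Prop) :
    numPaths A 4 = Fintype.card
      {f : Fin 4 → V // ∀ a b : Fin 4, A (f a) (f b) ↔ (b : ℕ) = (a : ℕ) + 1} := by
  classical
  rw [Fintype.card_subtype]
  unfold numPaths
  symm
  apply Finset.card_bij (fun f _ => Finset.univ.image f)
  · intro f hf
    simp only [Finset.mem_filter, Finset.mem_univ, true_and] at hf ⊢
    exact ⟨f, path_inj A f hf, fun v => by simp, hf⟩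
  · intro f hf g hg he
    simp only [Finset.mem_filter, Finset.mem_univ, true_and] at hf hg
    refine witness_unique A f g hf hg ?_
    intro v
    constructor
    · rintro ⟨i, rfl⟩
      have : f i ∈ Finset.univ.image g := by rw [← he]; simp
      simpa using this
    · rintro ⟨i, rfl⟩
      have : g i ∈ Finset.univ.image f := by rw [he]; simp
      simpa using this
  · intro S hS
    simp only [Finset.mem_filter, Finset.mem_univ, true_and] at hS
    obtain ⟨f, hinj, hmem, harc⟩ := hS
    refine ⟨f, by simp [harc], ?_⟩
    ext v
    simp [hmem v, eq_comm]

/-- The uniform `j`-fold blow-up `B` of an oriented graph `A`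
(vertex set `V × Fin j`, with an arc `(u,a) → (v,b)` iff `u → v` in `A`) has exactly
`j⁴` times as many induced copies of `P⃗₄` as `A`, and is `T⃗₃`-free whenever `A` is. -/
theorem uniform_blowup_P4 {V : Type*} [Fintype V] [DecidableEq V]
    (A : V → V → Prop) (hA : IsOriented A) (j : ℕ) (hj : 0 < j) :
    numPaths (fun p q : V × Fin j => A p.1 q.1) 4 = j ^ 4 * numPaths A 4 ∧
    (T3Free A → T3Free (fun p q : V × Fin j => A p.1 q.1)) := by
  constructor
  · rw [numPaths_four, numPaths_four]
    have e : {f : Fin 4 → V × Fin j // ∀ a b : Fin 4,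
          A (f a).1 (f b).1 ↔ (b : ℕ) = (a : ℕ) + 1} ≃
        {f : Fin 4 → V // ∀ a b : Fin 4, A (f a) (f b) ↔ (b : ℕ) = (a : ℕ) + 1} ×
          (Fin 4 → Fin j) := by
      refine ⟨fun f => ⟨⟨fun i => (f.1 i).1, f.2⟩, fun i => (f.1 i).2⟩,
        fun p => ⟨fun i => (p.1.1 i, p.2 i), p.1.2⟩, ?_, ?_⟩
      · intro f; ext i <;> rfl
      · intro p; ext i <;> rfl
    rw [Fintype.card_congr e, Fintype.card_prod, Fintype.card_fun]
    simp [mul_comm]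
  · intro h a b c ⟨h1, h2, h3⟩
    exact h a.1 b.1 c.1 ⟨h1, h2, h3⟩
end
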